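/- arXiv:1311.2748 — 6 statements merged into one kernel-verified Lean document; each statement's English description precedes it below -/
import Mathlib

section
/- Let H be a graph of order n with a complete dominating induced matching M of size m (so 0 < 2m < n). Then the spectral radius of the adjacency matrix of H equals (1 + √(1 + 8m(n−2m)))/2. -/
open Matrix Finset
open scoped Classical

def edgesShare {V : Type*} (e f : Sym2 V) : Prop := ∃ v, v ∈ e ∧ v ∈ f

def matchedVert {V : Type*} (M : Finset (Sym2 V)) (v : V) : Prop := ∃ e ∈ M, v ∈ e

/-- `M` is a set of edges of `G`, pairwise not sharing end-vertices. -/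
def IsMatchingSet {V : Type*} (G : SimpleGraph V) (M : Finset (Sym2 V)) : Prop :=
  (∀ e ∈ M, e ∈ G.edgeSet) ∧ ∀ e ∈ M, ∀ f ∈ M, e ≠ f → ¬ edgesShare e f

/-- Dominating induced matching: every edge of `G` is in `M` or shares an
end-vertex with exactly one edge of `M`. -/
def IsDIM {V : Type*} (G : SimpleGraph V) (M : Finset (Sym2 V)) : Prop :=
  IsMatchingSet G M ∧ ∀ e ∈ G.edgeSet, e ∉ M → ∃! f, f ∈ M ∧ edgesShare e f

/-- Induced matching: the subgraph induced by the matched vertices consists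
exactly of the edges of `M`. -/
def IsInducedMatching {V : Type*} (G : SimpleGraph V) (M : Finset (Sym2 V)) : Prop :=
  IsMatchingSet G M ∧ ∀ e ∈ G.edgeSet, (∀ v ∈ e, matchedVert M v) → e ∈ M

/-- Complete dominating induced matching: a DIM such that the set of unmatched
vertices is nonempty and every matched vertex is adjacent to every unmatched vertex,
i.e. `E(G) = M ∪ {xy : x ∈ V(M), y ∉ V(M)}`. -/
def IsCompleteDIM {V : Type*} (G : SimpleGraph V) (M : Finset (Sym2 V)) : Prop :=
  IsDIM G M ∧ (∃ v, ¬ matchedVert M v) ∧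
    ∀ x y : V, matchedVert M x → ¬ matchedVert M y → G.Adj x y

lemma matrix_spectrum_iff {N : ℕ} (A : Matrix (Fin N) (Fin N) ℝ) (μ : ℝ) :
    μ ∈ spectrum ℝ A ↔ ∃ x : Fin N → ℝ, x ≠ 0 ∧ A.mulVec x = μ • x := by
  rw [spectrum.mem_iff, Matrix.isUnit_iff_isUnit_det, isUnit_iff_ne_zero, not_not,
    ← Matrix.exists_mulVec_eq_zero_iff]
  have key : ∀ x : Fin N → ℝ, (algebraMap ℝ (Matrix (Fin N) (Fin N) ℝ) μ - A).mulVec x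
      = μ • x - A.mulVec x := by
    intro x
    rw [Matrix.sub_mulVec, Algebra.algebraMap_eq_smul_one, Matrix.smul_mulVec,
      Matrix.one_mulVec]
  constructor
  · rintro ⟨x, hx0, hx⟩
    exact ⟨x, hx0, (sub_eq_zero.mp (by rw [← key]; exact hx)).symm⟩
  · rintro ⟨x, hx0, hx⟩
    exact ⟨x, hx0, by rw [key, hx, sub_self]⟩

/-- If `H` is a graph of order `n` with a complete dominating induced matching of size `m`,
then the largest adjacency eigenvalue (spectral radius) of `H` is `(1+√(1+8m(n−2m)))/2`. -/
theorem stmt_2 (n m : ℕ) (hm : 0 < m) (hn : 2 * m < n)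
    (H : SimpleGraph (Fin n)) [DecidableRel H.Adj]
    (M : Finset (Sym2 (Fin n))) (hM : IsCompleteDIM H M) (hcard : M.card = m) :
    (1 + Real.sqrt (1 + 8 * m * ((n : ℝ) - 2 * m))) / 2 ∈ spectrum ℝ (H.adjMatrix ℝ) ∧
      ∀ μ ∈ spectrum ℝ (H.adjMatrix ℝ),
        μ ≤ (1 + Real.sqrt (1 + 8 * m * ((n : ℝ) - 2 * m))) / 2 := by
  obtain ⟨⟨⟨hMedge, hMdisj⟩, hdom⟩, ⟨u₀, hu₀⟩, hcomp⟩ := hM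
  have hndiag : ∀ e ∈ M, ¬ e.IsDiag := fun e he => H.not_isDiag_of_mem_edgeSet (hMedge e he)
  -- partner uniqueness
  have huniq : ∀ v w w' : Fin n, s(v,w) ∈ M → s(v,w') ∈ M → w = w' := by
    intro v w w' hw hw'
    by_contra hne
    have hwv : w ≠ v := fun h => hndiag _ hw (by rw [h]; exact Sym2.mk_isDiag_iff.mpr rfl)
    have hef : s(v,w) ≠ s(v,w') := by
      intro h
      rcases Sym2.eq_iff.mp h with ⟨_, h2⟩ | ⟨h1, h2⟩
      · exact hne h2
      · exact hwv h2
    exact hMdisj _ hw _ hw' hef ⟨v, Sym2.mem_mk_left _ _, Sym2.mem_mk_left _ _⟩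
  -- adjacency characterization
  have hadj : ∀ u v : Fin n, H.Adj u v ↔
      s(u,v) ∈ M ∨ (matchedVert M u ∧ ¬ matchedVert M v) ∨
        (¬ matchedVert M u ∧ matchedVert M v) := by
    intro u v
    constructor
    · intro h
      by_cases hu : matchedVert M u <;> by_cases hv : matchedVert M v
      · left
        by_contra hM'
        obtain ⟨eu, heu, hueu⟩ := hu
        obtain ⟨ev, hev, hvev⟩ := hv
        obtain ⟨f, _, hfu⟩ := hdom s(u,v) (H.mem_edgeSet.mpr h) hM'
        have h1 : eu = f := hfu eu ⟨heu, ⟨u, Sym2.mem_mk_left _ _, hueu⟩⟩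
        have h2 : ev = f := hfu ev ⟨hev, ⟨v, Sym2.mem_mk_right _ _, hvev⟩⟩
        have h3 : eu = s(u,v) := by
          refine (Sym2.mem_and_mem_iff h.ne).mp ⟨hueu, ?_⟩
          rw [h1.trans h2.symm]
          exact hvev
        exact hM' (h3 ▸ heu)
      · exact Or.inr (Or.inl ⟨hu, hv⟩)
      · exact Or.inr (Or.inr ⟨hu, hv⟩)
      · exfalso
        have hM' : s(u,v) ∉ M := fun hin => hu ⟨_, hin, Sym2.mem_mk_left _ _⟩
        obtain ⟨f, ⟨hf, ⟨w, hw1, hw2⟩⟩, _⟩ := hdom s(u,v) (H.mem_edgeSet.mpr h) hM'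
        rcases Sym2.mem_iff.mp hw1 with rfl | rfl
        · exact hu ⟨f, hf, hw2⟩
        · exact hv ⟨f, hf, hw2⟩
    · rintro (h | ⟨h1, h2⟩ | ⟨h1, h2⟩)
      · exact H.mem_edgeSet.mp (hMedge _ h)
      · exact hcomp u v h1 h2
      · exact (hcomp v u h2 h1).symm
  -- partner existence
  have hpart : ∀ v : Fin n, matchedVert M v → ∃ w, s(v,w) ∈ M ∧ matchedVert M w := by
    rintro v ⟨e, he, hve⟩
    revert hve
    induction e using Sym2.ind with
    | _ a b =>
      intro hve
      rcases Sym2.mem_iff.mp hve with rfl | rfl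
      · exact ⟨b, he, ⟨_, he, Sym2.mem_mk_right _ _⟩⟩
      · exact ⟨a, by rw [Sym2.eq_swap]; exact he, ⟨_, he, Sym2.mem_mk_left _ _⟩⟩
  -- matched and unmatched vertex sets
  set Ms : Finset (Fin n) := univ.filter (fun v => matchedVert M v) with hMsdef
  set Us : Finset (Fin n) := univ.filter (fun v => ¬ matchedVert M v) with hUsdef
  have hmemMs : ∀ v, v ∈ Ms ↔ matchedVert M v := by
    intro v; rw [hMsdef, Finset.mem_filter]; simp
  have hmemUs : ∀ v, v ∈ Us ↔ ¬ matchedVert M v := by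
    intro v; rw [hUsdef, Finset.mem_filter]; simp
  -- neighborhood characterizations
  have hnbrM : ∀ v w : Fin n, s(v,w) ∈ M → H.neighborFinset v = insert w Us := by
    intro v w hvw
    have hmv : matchedVert M v := ⟨_, hvw, Sym2.mem_mk_left _ _⟩
    ext u
    rw [SimpleGraph.mem_neighborFinset, Finset.mem_insert, hmemUs, hadj]
    constructor
    · rintro (h | ⟨_, h⟩ | ⟨h, _⟩)
      · exact Or.inl (huniq v u w h hvw)
      · exact Or.inr h
      · exact absurd hmv h
    · rintro (rfl | h)
      · exact Or.inl hvw
      · exact Or.inr (Or.inl ⟨hmv, h⟩)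
  have hnbrU : ∀ v : Fin n, ¬ matchedVert M v → H.neighborFinset v = Ms := by
    intro v hv
    ext u
    rw [SimpleGraph.mem_neighborFinset, hmemMs, hadj]
    constructor
    · rintro (h | ⟨h, _⟩ | ⟨_, h⟩)
      · exact absurd ⟨_, h, Sym2.mem_mk_left _ _⟩ hv
      · exact absurd h hv
      · exact h
    · intro h; exact Or.inr (Or.inr ⟨hv, h⟩)
  -- cardinalities
  have hMsCard : Ms.card = 2 * m := by
    have h1 : Ms = M.biUnion (fun e => univ.filter (· ∈ e)) := by
      ext v
      rw [hmemMs, Finset.mem_biUnion]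
      simp [matchedVert]
    have hdisj : ∀ e ∈ M, ∀ f ∈ M, e ≠ f →
        Disjoint (univ.filter (· ∈ e)) (univ.filter (· ∈ f)) := by
      intro e he f hf hef
      rw [Finset.disjoint_left]
      intro v hv hv'
      exact hMdisj e he f hf hef ⟨v, (Finset.mem_filter.mp hv).2, (Finset.mem_filter.mp hv').2⟩
    have h2 : ∀ e ∈ M, (univ.filter (· ∈ e)).card = 2 := by
      intro e he
      revert he
      induction e using Sym2.ind with
      | _ a b =>
        intro he
        have hab : a ≠ b := fun h => hndiag _ he (Sym2.mk_isDiag_iff.mpr h)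
        have h3 : (univ.filter (· ∈ s(a,b))) = {a, b} := by
          ext u; simp [Sym2.mem_iff]
        rw [h3, Finset.card_insert_of_notMem (by simp [hab]), Finset.card_singleton]
    rw [h1, Finset.card_biUnion hdisj, Finset.sum_congr rfl h2, Finset.sum_const, hcard,
      smul_eq_mul, mul_comm]
  have hUsCardN : Ms.card + Us.card = n := by
    rw [hMsdef, hUsdef, Finset.card_filter_add_card_filter_not, Finset.card_univ,
      Fintype.card_fin]
  have hUsCard : (Us.card : ℝ) = (n : ℝ) - 2 * m := by
    have : (Ms.card : ℝ) + Us.card = n := by exact_mod_cast hUsCardN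
    rw [hMsCard] at this
    push_cast at this ⊢
    linarith
  -- spectral quantities
  have hmk : (1:ℝ) ≤ m := by exact_mod_cast hm
  have hk1 : (1:ℝ) ≤ (n : ℝ) - 2 * m := by
    have : (2 * m + 1 : ℕ) ≤ n := hn
    have h := (Nat.cast_le (α := ℝ)).mpr this
    push_cast at h
    linarith
  set k : ℝ := (n : ℝ) - 2 * m with hkdef
  set s : ℝ := Real.sqrt (1 + 8 * m * k) with hsdef
  have hs2 : s ^ 2 = 1 + 8 * m * k := Real.sq_sqrt (by nlinarith)
  have hs0 : (0:ℝ) ≤ s := hsdef ▸ Real.sqrt_nonneg _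
  have hs1 : (1:ℝ) ≤ s := by nlinarith [hs2, hs0, hmk, hk1]
  set lam : ℝ := (1 + s) / 2 with hlamdef
  have hlam1 : 1 ≤ lam := by rw [hlamdef]; linarith
  have hlameq : lam * lam = lam + 2 * m * k := by
    rw [hlamdef]; linear_combination hs2 / 4
  constructor
  · -- lam is an eigenvalue
    rw [matrix_spectrum_iff]
    refine ⟨fun v => if matchedVert M v then lam else 2*m, ?_, ?_⟩
    · intro h0
      have h1 := congrFun h0 u₀
      simp only [if_neg hu₀, Pi.zero_apply] at h1
      nlinarith [hmk]
    · funext v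
      rw [SimpleGraph.adjMatrix_mulVec_apply, Pi.smul_apply, smul_eq_mul]
      by_cases hv : matchedVert M v
      · obtain ⟨w, hw, hwm⟩ := hpart v hv
        rw [hnbrM v w hw, Finset.sum_insert (fun h => (hmemUs w).mp h hwm), if_pos hwm,
          if_pos hv]
        have h4 : ∀ u ∈ Us, (if matchedVert M u then lam else 2*(m:ℝ)) = 2*m := by
          intro u hu; rw [if_neg ((hmemUs u).mp hu)]
        rw [Finset.sum_congr rfl h4, Finset.sum_const, nsmul_eq_mul]
        rw [hUsCard]
        linear_combination -hlameq
      · rw [hnbrU v hv, if_neg hv]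
        have h4 : ∀ u ∈ Ms, (if matchedVert M u then lam else 2*(m:ℝ)) = lam := by
          intro u hu; rw [if_pos ((hmemMs u).mp hu)]
        rw [Finset.sum_congr rfl h4, Finset.sum_const, nsmul_eq_mul, hMsCard]
        push_cast
        ring
  · -- lam is the largest eigenvalue
    intro μ hμ
    by_cases hμ1 : μ ≤ 1
    · linarith
    push_neg at hμ1
    obtain ⟨x, hx0, hxeq⟩ := (matrix_spectrum_iff _ _).mp hμ
    have heig : ∀ v, ∑ u ∈ H.neighborFinset v, x u = μ * x v := by
      intro v
      have h := congrFun hxeq v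
      rwa [SimpleGraph.adjMatrix_mulVec_apply, Pi.smul_apply, smul_eq_mul] at h
    set S : ℝ := ∑ w ∈ Ms, x w with hSdef
    have hU : ∀ u, ¬ matchedVert M u → μ * x u = S := by
      intro u hu
      rw [← heig u, hnbrU u hu]
    have hsumU : μ * ∑ u ∈ Us, x u = k * S := by
      rw [Finset.mul_sum, Finset.sum_congr rfl (fun u hu => hU u ((hmemUs u).mp hu)),
        Finset.sum_const, nsmul_eq_mul, hUsCard]
    have hMeq : ∀ v w, s(v,w) ∈ M → μ * (μ * x v) = μ * x w + k * S := by
      intro v w hvw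
      have h1 := heig v
      rw [hnbrM v w hvw, Finset.sum_insert
        (fun h => (hmemUs w).mp h ⟨_, hvw, Sym2.mem_mk_right _ _⟩)] at h1
      have h2 : μ * (x w + ∑ u ∈ Us, x u) = μ * (μ * x v) := by rw [h1]
      rw [mul_add, hsumU] at h2
      linarith
    have hMall : ∀ v, matchedVert M v → μ * (μ - 1) * x v = k * S := by
      intro v hv
      obtain ⟨w, hw, _⟩ := hpart v hv
      have h1 := hMeq v w hw
      have h2 := hMeq w v (by rw [Sym2.eq_swap]; exact hw)
      have hxvw : x v = x w := by
        have h3 : μ * (μ + 1) * (x v - x w) = 0 := by linear_combination h1 - h2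
        rcases mul_eq_zero.mp h3 with h | h
        · have hpos : 0 < μ * (μ + 1) :=
            mul_pos (by linarith) (by linarith)
          linarith
        · linarith
      rw [hxvw] at h1 ⊢
      linear_combination h1
    have hSS : μ * (μ - 1) * S = 2 * m * (k * S) := by
      have h1 : ∑ v ∈ Ms, (μ * (μ - 1) * x v) = ∑ v ∈ Ms, k * S :=
        Finset.sum_congr rfl (fun v hv => hMall v ((hmemMs v).mp hv))
      rw [← Finset.mul_sum, Finset.sum_const, hMsCard, nsmul_eq_mul, ← hSdef] at h1
      push_cast at h1
      linear_combination h1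
    have hSne : S ≠ 0 := by
      intro hS0
      apply hx0
      funext v
      by_cases hv : matchedVert M v
      · have h1 := hMall v hv
        rw [hS0, mul_zero] at h1
        have hpos : 0 < μ * (μ - 1) := mul_pos (by linarith) (by linarith)
        rcases mul_eq_zero.mp h1 with h | h
        · exact absurd h hpos.ne'
        · simpa using h
      · have h1 := hU v hv
        rw [hS0] at h1
        rcases mul_eq_zero.mp h1 with h | h
        · exact absurd h (by positivity : (0:ℝ) < μ).ne'
        · simpa using h
    have hquad : μ * μ - μ = 2 * m * k := by
      have h1 : S * (μ * (μ - 1) - 2 * m * k) = 0 := by linear_combination hSS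
      rcases mul_eq_zero.mp h1 with h | h
      · exact absurd h hSne
      · linear_combination h
    have h2 : (2*μ - 1)^2 = 1 + 8*m*k := by linear_combination 4 * hquad
    have h3 : s = 2*μ - 1 := by
      rw [hsdef, ← h2, Real.sqrt_sq (by linarith)]
    rw [hlamdef, h3]
    linarith
end

section
/- Let H be a graph of order n with a complete dominating induced matching M of size m (0 < 2m < n). Then the spectral radius of the signless Laplacian matrix Q(H) = D(H) + A(H) equals (2 + n + √((2+n)² − 16m))/2. -/
open Matrix Finset
open scoped Classical

/-- Membership in the spectrum of a real matrix is having an eigenvector. -/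
lemma aux_matrix_mem_spectrum_iff {k : Type*} [Fintype k] [DecidableEq k]
    (Q : Matrix k k ℝ) (μ : ℝ) :
    μ ∈ spectrum ℝ Q ↔ ∃ v : k → ℝ, v ≠ 0 ∧ Q.mulVec v = μ • v := by
  have key : ∀ v : k → ℝ, (algebraMap ℝ (Matrix k k ℝ) μ - Q).mulVec v = μ • v - Q.mulVec v := by
    intro v
    rw [Matrix.sub_mulVec, Algebra.algebraMap_eq_smul_one, Matrix.smul_mulVec,
      Matrix.one_mulVec]
  rw [spectrum.mem_iff, Matrix.isUnit_iff_isUnit_det, isUnit_iff_ne_zero, not_not,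
    ← Matrix.exists_mulVec_eq_zero_iff]
  constructor
  · rintro ⟨v, hv, h⟩
    refine ⟨v, hv, ?_⟩
    rw [key v, sub_eq_zero] at h
    exact h.symm
  · rintro ⟨v, hv, h⟩
    exact ⟨v, hv, by rw [key v, h, sub_self]⟩

/-- If `H` is a graph of order `n` with a complete dominating induced matching of size `m`,
then the largest signless Laplacian eigenvalue of `H` is `(2+n+√((2+n)²−16m))/2`. -/
theorem stmt_4 (n m : ℕ) (hm : 0 < m) (hn : 2 * m < n)
    (H : SimpleGraph (Fin n)) [DecidableRel H.Adj]
    (M : Finset (Sym2 (Fin n))) (hM : IsCompleteDIM H M) (hcard : M.card = m) :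
    (2 + (n : ℝ) + Real.sqrt ((2 + (n : ℝ))^2 - 16 * m)) / 2
        ∈ spectrum ℝ (H.degMatrix ℝ + H.adjMatrix ℝ) ∧
      ∀ μ ∈ spectrum ℝ (H.degMatrix ℝ + H.adjMatrix ℝ),
        μ ≤ (2 + (n : ℝ) + Real.sqrt ((2 + (n : ℝ))^2 - 16 * m)) / 2 := by
  classical
  obtain ⟨⟨⟨hMedge, hMdisj⟩, hdim⟩, ⟨v₀, hv₀⟩, hcompl⟩ := hM
  set Q : Matrix (Fin n) (Fin n) ℝ := H.degMatrix ℝ + H.adjMatrix ℝ with hQdef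
  set S : Finset (Fin n) := Finset.univ.filter (fun v => matchedVert M v) with hSdef
  have hmemS : ∀ v, v ∈ S ↔ matchedVert M v := by
    intro v; simp [hSdef]
  -- two edges of M sharing a vertex coincide
  have huniq : ∀ e ∈ M, ∀ f ∈ M, ∀ v : Fin n, v ∈ e → v ∈ f → e = f := by
    intro e he f hf v hve hvf
    by_contra hne
    exact hMdisj e he f hf hne ⟨v, hve, hvf⟩
  -- adjacency from an unmatched vertex
  have hadj_un : ∀ v u : Fin n, ¬ matchedVert M v → (H.Adj v u ↔ matchedVert M u) := by
    intro v u hv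
    constructor
    · intro hadj
      by_contra hu
      have he : s(v, u) ∈ H.edgeSet := H.mem_edgeSet.2 hadj
      have hnm : s(v, u) ∉ M := fun h => hv ⟨_, h, Sym2.mem_mk_left _ _⟩
      obtain ⟨f, ⟨hfM, w, hw1, hw2⟩, -⟩ := hdim _ he hnm
      rcases Sym2.mem_iff.1 hw1 with rfl | rfl
      · exact hv ⟨f, hfM, hw2⟩
      · exact hu ⟨f, hfM, hw2⟩
    · intro hu
      exact (hcompl u v hu hv).symm
  -- each matched vertex has a unique partner
  have hpartner : ∀ v : Fin n, matchedVert M v → ∃ w, w ≠ v ∧ matchedVert M w ∧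
      (∀ u, matchedVert M u → (H.Adj v u ↔ u = w)) := by
    rintro v ⟨e, heM, hve⟩
    have hnd : ¬ e.IsDiag := H.not_isDiag_of_mem_edgeSet (hMedge e heM)
    obtain ⟨w, rfl⟩ := Sym2.mem_iff_exists.1 hve
    have hwv : w ≠ v := fun h => hnd (by simp [h])
    refine ⟨w, hwv, ⟨_, heM, Sym2.mem_mk_right _ _⟩, ?_⟩
    intro u hu
    constructor
    · intro hadj
      obtain ⟨f, hfM, huf⟩ := hu
      have hne : u ≠ v := fun h => H.loopless.irrefl v (h ▸ hadj)
      by_cases hmem : s(v, u) ∈ M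
      · have h1 : s(v, u) = s(v, w) :=
          huniq _ hmem _ heM v (Sym2.mem_mk_left _ _) (Sym2.mem_mk_left _ _)
        rcases Sym2.eq_iff.1 h1 with ⟨-, h⟩ | ⟨-, h⟩
        · exact h
        · exact absurd h hne
      · obtain ⟨g, -, hgu⟩ := hdim _ (H.mem_edgeSet.2 hadj) hmem
        have h1 : s(v, w) = g :=
          hgu _ ⟨heM, v, Sym2.mem_mk_left _ _, Sym2.mem_mk_left _ _⟩
        have h2 : f = g := hgu _ ⟨hfM, u, Sym2.mem_mk_right _ _, huf⟩
        have : u ∈ s(v, w) := by rw [h1]; rw [h2] at huf; exact huf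
        rcases Sym2.mem_iff.1 this with h | h
        · exact absurd h hne
        · exact h
    · rintro rfl
      exact H.mem_edgeSet.1 (hMedge _ heM)
  -- cardinality of the matched set
  have hScard : S.card = 2 * m := by
    have hSeq : S = M.biUnion (fun e => Finset.univ.filter (fun v => v ∈ e)) := by
      ext v
      simp only [hmemS, Finset.mem_biUnion, Finset.mem_filter, Finset.mem_univ, true_and]
      exact Iff.rfl
    have hdisj : ∀ e ∈ M, ∀ f ∈ M, e ≠ f →
        Disjoint (Finset.univ.filter (fun v => v ∈ e)) (Finset.univ.filter (fun v => v ∈ f)) := by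
      intro e he f hf hne
      rw [Finset.disjoint_left]
      intro a ha ha'
      simp only [Finset.mem_filter, Finset.mem_univ, true_and] at ha ha'
      exact hMdisj e he f hf hne ⟨a, ha, ha'⟩
    have hcard2 : ∀ e ∈ M, (Finset.univ.filter (fun v => v ∈ e)).card = 2 := by
      intro e he
      have hnd : ¬ e.IsDiag := H.not_isDiag_of_mem_edgeSet (hMedge e he)
      induction e using Sym2.inductionOn with
      | hf a b =>
        have hab : a ≠ b := fun h => hnd (by simp [h])
        have : Finset.univ.filter (fun v => v ∈ s(a, b)) = {a, b} := by
          ext v; simp [Sym2.mem_iff]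
        rw [this, Finset.card_insert_of_notMem (by simp [hab]), Finset.card_singleton]
    rw [hSeq, Finset.card_biUnion hdisj, Finset.sum_congr rfl hcard2, Finset.sum_const, hcard,
      smul_eq_mul, mul_comm]
  have hScardc : Sᶜ.card = n - 2 * m := by
    rw [Finset.card_compl, hScard, Fintype.card_fin]
  -- neighbor finsets
  have hnbr_un : ∀ v : Fin n, ¬ matchedVert M v → H.neighborFinset v = S := by
    intro v hv
    ext u
    rw [SimpleGraph.mem_neighborFinset, hmemS]
    exact hadj_un v u hv
  -- real number setup
  set N : ℝ := (n : ℝ) with hNdef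
  set Mr : ℝ := (m : ℝ) with hMrdef
  have hMr0 : 0 < Mr := by rw [hMrdef]; exact_mod_cast hm
  have hNM : 2 * Mr < N := by rw [hMrdef, hNdef]; exact_mod_cast hn
  have hDnn : (0:ℝ) ≤ (2 + N)^2 - 16 * Mr := by nlinarith [sq_nonneg (Mr - 1), hMr0, hNM]
  set s : ℝ := Real.sqrt ((2 + N)^2 - 16 * Mr) with hsdef
  have hs2 : s ^ 2 = (2 + N)^2 - 16 * Mr := Real.sq_sqrt hDnn
  set μ : ℝ := (2 + N + s) / 2 with hμdef
  have hquad : μ ^ 2 - (2 + N) * μ + 4 * Mr = 0 := by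
    rw [hμdef]; linear_combination (1/4 : ℝ) * hs2
  have hsgt : |N + 2 - 4 * Mr| < s := by
    rw [← Real.sqrt_sq_eq_abs, hsdef]
    apply Real.sqrt_lt_sqrt (sq_nonneg _)
    nlinarith
  have hαpos : 0 < μ - 2 * Mr := by
    have := neg_abs_le (N + 2 - 4 * Mr)
    rw [hμdef]
    nlinarith [hsgt, this]
  -- the eigenvector
  set x : Fin n → ℝ := fun v => if matchedVert M v then μ - 2 * Mr else 2 * Mr with hxdef
  have hxpos : ∀ v, 0 < x v := by
    intro v
    rw [hxdef]
    dsimp only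
    split
    · exact hαpos
    · positivity
  have hsumS : ∑ u ∈ S, x u = 2 * Mr * (μ - 2 * Mr) := by
    have : ∀ u ∈ S, x u = μ - 2 * Mr := by
      intro u hu; rw [hxdef]; simp [ (hmemS u).1 hu ]
    rw [Finset.sum_congr rfl this, Finset.sum_const, hScard, nsmul_eq_mul]
    push_cast [hMrdef]
    ring
  have hsumSc : ∑ u ∈ Sᶜ, x u = (N - 2 * Mr) * (2 * Mr) := by
    have : ∀ u ∈ Sᶜ, x u = 2 * Mr := by
      intro u hu
      rw [Finset.mem_compl, hmemS] at hu
      rw [hxdef]; simp [hu]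
    rw [Finset.sum_congr rfl this, Finset.sum_const, hScardc, nsmul_eq_mul,
      Nat.cast_sub (le_of_lt hn)]
    push_cast [hMrdef, hNdef]
    ring
  have hdegQ : ∀ v : Fin n, (Q.mulVec x) v
      = (H.degree v : ℝ) * x v + ∑ u ∈ H.neighborFinset v, x u := by
    intro v
    rw [hQdef, Matrix.add_mulVec, Pi.add_apply, SimpleGraph.degMatrix,
      Matrix.mulVec_diagonal, SimpleGraph.adjMatrix_mulVec_apply]
  have hdeg_un : ∀ v : Fin n, ¬ matchedVert M v → (H.degree v : ℝ) = 2 * Mr := by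
    intro v hv
    rw [SimpleGraph.degree, hnbr_un v hv, hScard]
    push_cast [hMrdef]; ring
  -- eigenvector equation
  have heig : Q.mulVec x = μ • x := by
    funext v
    rw [hdegQ v, Pi.smul_apply, smul_eq_mul]
    by_cases hv : matchedVert M v
    · obtain ⟨w, hwv, hwm, hiff⟩ := hpartner v hv
      have hnbr : H.neighborFinset v = insert w Sᶜ := by
        ext u
        rw [SimpleGraph.mem_neighborFinset, Finset.mem_insert, Finset.mem_compl, hmemS]
        constructor
        · intro hadj
          by_cases hu : matchedVert M u
          · exact Or.inl ((hiff u hu).1 hadj)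
          · exact Or.inr hu
        · rintro (rfl | hu)
          · exact (hiff u hwm).2 rfl
          · exact hcompl v u hv hu
      have hwnot : w ∉ Sᶜ := by rw [Finset.mem_compl, hmemS]; exact fun h => h hwm
      have hdeg : (H.degree v : ℝ) = N - 2 * Mr + 1 := by
        rw [SimpleGraph.degree, hnbr, Finset.card_insert_of_notMem hwnot, hScardc,
          Nat.cast_add, Nat.cast_sub (le_of_lt hn)]
        push_cast [hMrdef, hNdef]; ring
      have hxv : x v = μ - 2 * Mr := by rw [hxdef]; simp [hv]
      have hxw : x w = μ - 2 * Mr := by rw [hxdef]; simp [hwm]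
      rw [hnbr, Finset.sum_insert hwnot, hsumSc, hdeg, hxv, hxw]
      linear_combination -hquad
    · have hdeg := hdeg_un v hv
      have hxv : x v = 2 * Mr := by rw [hxdef]; simp [hv]
      rw [hnbr_un v hv, hsumS, hdeg, hxv]
      ring
  -- symmetry and nonnegativity of Q
  have hQentry : ∀ i j, Q i j = (if i = j then (H.degree i : ℝ) else 0)
      + (if H.Adj i j then 1 else 0) := by
    intro i j
    rw [hQdef, Matrix.add_apply, SimpleGraph.degMatrix, Matrix.diagonal_apply,
      SimpleGraph.adjMatrix_apply]
  have hQsymm : ∀ i j, Q i j = Q j i := by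
    intro i j
    rw [hQentry, hQentry]
    by_cases h : i = j
    · subst h; rfl
    · rw [if_neg h, if_neg (Ne.symm h)]
      simp only [H.adj_comm i j]
  have hQnn : ∀ i j, 0 ≤ Q i j := by
    intro i j
    rw [hQentry]
    have h1 : (0:ℝ) ≤ if i = j then (H.degree i : ℝ) else 0 := by positivity
    have h2 : (0:ℝ) ≤ if H.Adj i j then (1:ℝ) else 0 := by positivity
    linarith
  have hμeq : (2 + (n : ℝ) + Real.sqrt ((2 + (n : ℝ))^2 - 16 * m)) / 2 = μ := by
    rw [hμdef, hsdef, hNdef, hMrdef]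
  constructor
  · rw [aux_matrix_mem_spectrum_iff]
    refine ⟨x, ?_, heig⟩
    intro h
    have := hxpos v₀
    rw [h] at this
    exact lt_irrefl 0 this
  · intro μ' hμ'
    obtain ⟨v, hv0, hveq⟩ := (aux_matrix_mem_spectrum_iff Q μ').1 hμ'
    set w : Fin n → ℝ := fun i => |v i| with hwdef
    have hkey : ∀ i, |μ'| * w i ≤ (Q.mulVec w) i := by
      intro i
      have h1 : μ' * v i = ∑ j, Q i j * v j := by
        have := congrFun hveq i
        rw [Pi.smul_apply, smul_eq_mul] at this
        rw [← this, Matrix.mulVec, dotProduct]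
      have : |μ'| * w i = |∑ j, Q i j * v j| := by
        rw [hwdef, ← abs_mul, h1]
      rw [this]
      calc |∑ j, Q i j * v j| ≤ ∑ j, |Q i j * v j| := Finset.abs_sum_le_sum_abs _ _
        _ = ∑ j, Q i j * w j := by
            apply Finset.sum_congr rfl
            intro j _
            rw [abs_mul, abs_of_nonneg (hQnn i j), hwdef]
        _ = (Q.mulVec w) i := by rw [Matrix.mulVec, dotProduct]
    set S0 : ℝ := ∑ i, x i * w i with hS0def
    have hwnn : ∀ i, 0 ≤ w i := fun i => abs_nonneg _
    have hS0pos : 0 < S0 := by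
      have hex : ∃ i, v i ≠ 0 := by
        by_contra h
        push_neg at h
        exact hv0 (funext h)
      obtain ⟨i, hi⟩ := hex
      apply Finset.sum_pos' (fun j _ => mul_nonneg (le_of_lt (hxpos j)) (hwnn j))
      exact ⟨i, Finset.mem_univ i, mul_pos (hxpos i) (abs_pos.2 hi)⟩
    have hmain : |μ'| * S0 ≤ μ * S0 := by
      have step1 : |μ'| * S0 ≤ ∑ i, x i * (Q.mulVec w) i := by
        rw [hS0def, Finset.mul_sum]
        apply Finset.sum_le_sum
        intro i _
        calc |μ'| * (x i * w i) = x i * (|μ'| * w i) := by ring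
          _ ≤ x i * (Q.mulVec w) i :=
              mul_le_mul_of_nonneg_left (hkey i) (le_of_lt (hxpos i))
      have step2 : ∑ i, x i * (Q.mulVec w) i = μ * S0 := by
        have : ∑ i, x i * (Q.mulVec w) i = ∑ j, (Q.mulVec x) j * w j := by
          simp only [Matrix.mulVec, dotProduct, Finset.mul_sum, Finset.sum_mul]
          rw [Finset.sum_comm]
          apply Finset.sum_congr rfl
          intro j _
          apply Finset.sum_congr rfl
          intro i _
          rw [hQsymm i j]
          ring
        rw [this, hS0def, Finset.mul_sum]
        apply Finset.sum_congr rfl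
        intro j _
        rw [heig, Pi.smul_apply, smul_eq_mul]
        ring
      linarith [step1, step2 ▸ step1]
    have : |μ'| ≤ μ := le_of_mul_le_mul_right hmain hS0pos
    exact le_trans (le_abs_self μ') this
end

section
/- Let H be the join of mK₂ with the empty graph on s = n−2m ≥ 1 vertices, where m ≥ 1 and n = 2m + s. Then the adjacency spectrum of H is { (1+√(1+8m(n−2m)))/2, (1−√(1+8m(n−2m)))/2, 1 with multiplicity m−1, 0 with multiplicity n−2m−1, −1 with multiplicity m }. -/
open Matrix Finset
open scoped Classical

/-- The join of `m K₂` with the empty graph on `s` vertices, vertices labeled so that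
the `2m` matched vertices (paired as `{2k, 2k+1}`) come first. -/
def dimJoin (m s : ℕ) : SimpleGraph (Fin (2*m+s)) where
  Adj i j := i ≠ j ∧ (((i:ℕ) < 2*m ∧ (j:ℕ) < 2*m ∧ (i:ℕ)/2 = (j:ℕ)/2) ∨
    ((i:ℕ) < 2*m ∧ 2*m ≤ (j:ℕ)) ∨ (2*m ≤ (i:ℕ) ∧ (j:ℕ) < 2*m))
  symm := by
    constructor
    rintro i j ⟨hne, h⟩
    refine ⟨hne.symm, ?_⟩
    rcases h with ⟨a,b,c⟩|⟨a,b⟩|⟨a,b⟩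
    · exact Or.inl ⟨b, a, c.symm⟩
    · exact Or.inr (Or.inr ⟨b, a⟩)
    · exact Or.inr (Or.inl ⟨b, a⟩)
  loopless := ⟨fun i h => h.1 rfl⟩



namespace DIM5
open Polynomial

noncomputable section

/-- entry of the adjacency matrix of `dimJoin m s`, as a function of ℕ coords -/
def aEnt (m : ℕ) (i k : ℕ) : ℝ :=
  if i ≠ k ∧ ((i < 2*m ∧ k < 2*m ∧ i/2 = k/2) ∨ (i < 2*m ∧ 2*m ≤ k) ∨ (2*m ≤ i ∧ k < 2*m))
  then 1 else 0

def partner (i : ℕ) : ℕ := if i % 2 = 0 then i + 1 else i - 1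

def colW (m : ℕ) (θ : ℝ) (i : ℕ) : ℝ := if i < 2*m then θ else (2*m : ℝ)
def helm (k : ℕ) (p : ℕ) : ℝ := if p < k then 1 else if p = k then -(k:ℝ) else 0
def colU (m k : ℕ) (i : ℕ) : ℝ := if i < 2*m then helm k (i/2) else 0
def colZ (m t : ℕ) (i : ℕ) : ℝ := if i < 2*m then 0 else helm t (i - 2*m)
def colV (k : ℕ) (i : ℕ) : ℝ := if i = 2*k then 1 else if i = 2*k+1 then -1 else 0

/-- columns of the eigenvector matrix -/
def pEnt (m s : ℕ) (θp θn : ℝ) (i j : ℕ) : ℝ :=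
  if j = 0 then colW m θp i
  else if j = 1 then colW m θn i
  else if j < m + 1 then colU m (j - 1) i
  else if j < m + s then colZ m (j - m) i
  else colV (j - (m + s)) i

/-- eigenvalues -/
def dEnt (m s : ℕ) (θp θn : ℝ) (j : ℕ) : ℝ :=
  if j = 0 then θp else if j = 1 then θn else if j < m + 1 then 1
  else if j < m + s then 0 else -1

/-- squared norms of the columns -/
def nEnt (m s : ℕ) (θp θn : ℝ) (j : ℕ) : ℝ :=
  if j = 0 then 2*m*θp^2 + 4*m^2*s
  else if j = 1 then 2*m*θn^2 + 4*m^2*s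
  else if j < m + 1 then 2*((j-1 : ℕ) + ((j-1 : ℕ):ℝ)^2)
  else if j < m + s then ((j-m : ℕ) + ((j-m : ℕ):ℝ)^2)
  else 2

/- ### sum helper lemmas -/

lemma sum_pairs (g : ℕ → ℝ) (m : ℕ) :
    ∑ k ∈ range (2*m), g (k/2) = 2 * ∑ p ∈ range m, g p := by
  induction m with
  | zero => simp
  | succ m ih =>
      have h2 : 2*(m+1) = (2*m + 1) + 1 := by ring
      rw [h2, Finset.sum_range_succ, Finset.sum_range_succ, ih, Finset.sum_range_succ]
      have e1 : (2*m)/2 = m := by omega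
      have e2 : (2*m+1)/2 = m := by omega
      rw [e1, e2]; ring

lemma sum_helm (k m : ℕ) (hk : k < m) : ∑ p ∈ range m, helm k p = 0 := by
  have hsub : range (k+1) ⊆ range m := by
    intro x hx; simp only [mem_range] at *; omega
  rw [← Finset.sum_subset hsub (by
    intro x hx hx'
    simp only [mem_range] at hx hx'
    unfold helm
    rw [if_neg (by omega), if_neg (by omega)])]
  rw [Finset.sum_range_succ]
  have : ∀ p ∈ range k, helm k p = 1 := by
    intro p hp; simp only [mem_range] at hp; unfold helm; rw [if_pos hp]
  rw [Finset.sum_congr rfl this, Finset.sum_const, nsmul_eq_mul, mul_one]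
  unfold helm
  rw [if_neg (by omega), if_pos rfl, Finset.card_range]
  ring

lemma sum_helm_mul (k k' m : ℕ) (hk : k < k') (hk' : k' < m) :
    ∑ p ∈ range m, helm k p * helm k' p = 0 := by
  have hsub : range (k+1) ⊆ range m := by
    intro x hx; simp only [mem_range] at *; omega
  rw [← Finset.sum_subset hsub (by
    intro x hx hx'
    simp only [mem_range] at hx hx'
    unfold helm
    rw [if_neg (by omega), if_neg (by omega), zero_mul])]
  rw [Finset.sum_range_succ]
  have : ∀ p ∈ range k, helm k p * helm k' p = 1 := by
    intro p hp; simp only [mem_range] at hp; unfold helm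
    rw [if_pos hp, if_pos (by omega), one_mul]
  rw [Finset.sum_congr rfl this, Finset.sum_const, nsmul_eq_mul, mul_one]
  unfold helm
  rw [if_neg (by omega), if_pos rfl, if_pos hk, Finset.card_range]
  ring

lemma sum_helm_sq (k m : ℕ) (hk : k < m) :
    ∑ p ∈ range m, helm k p * helm k p = (k:ℝ) + (k:ℝ)^2 := by
  have hsub : range (k+1) ⊆ range m := by
    intro x hx; simp only [mem_range] at *; omega
  rw [← Finset.sum_subset hsub (by
    intro x hx hx'
    simp only [mem_range] at hx hx'
    unfold helm
    rw [if_neg (by omega), if_neg (by omega), zero_mul])]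
  rw [Finset.sum_range_succ]
  have : ∀ p ∈ range k, helm k p * helm k p = 1 := by
    intro p hp; simp only [mem_range] at hp; unfold helm
    rw [if_pos hp, one_mul]
  rw [Finset.sum_congr rfl this, Finset.sum_const, nsmul_eq_mul, mul_one]
  unfold helm
  rw [if_neg (by omega), if_pos rfl, Finset.card_range]
  ring

lemma sum_colV (f : ℕ → ℝ) (N k : ℕ) (hk : 2*k+1 < N) :
    ∑ i ∈ range N, f i * colV k i = f (2*k) - f (2*k+1) := by
  have : ∀ i, f i * colV k i =
      (if i = 2*k then f (2*k) else 0) + (if i = 2*k+1 then -f (2*k+1) else 0) := by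
    intro i
    unfold colV
    split_ifs with h1 h2 h3 h4 h5 <;> try omega
    all_goals subst_vars <;> ring
  rw [Finset.sum_congr rfl (fun i _ => this i), Finset.sum_add_distrib,
    Finset.sum_ite_eq' (range N) (2*k) (fun _ => f (2*k)),
    Finset.sum_ite_eq' (range N) (2*k+1) (fun _ => -f (2*k+1))]
  rw [if_pos (by simp only [mem_range]; omega), if_pos (by simp only [mem_range]; omega)]
  ring


lemma partner_lt {i m : ℕ} (h : i < 2*m) : partner i < 2*m := by
  unfold partner; split_ifs <;> omega

lemma rowSumA (m s i : ℕ) (hi : i < 2*m+s) (c : ℕ → ℝ) :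
    ∑ k ∈ range (2*m+s), aEnt m i k * c k =
      if i < 2*m then c (partner i) + ∑ k ∈ Ico (2*m) (2*m+s), c k
      else ∑ k ∈ range (2*m), c k := by
  have hsplit : ∑ k ∈ range (2*m+s), aEnt m i k * c k
      = ∑ k ∈ range (2*m), aEnt m i k * c k + ∑ k ∈ Ico (2*m) (2*m+s), aEnt m i k * c k := by
    rw [Finset.range_eq_Ico,
      ← Finset.sum_Ico_consecutive _ (by omega : 0 ≤ 2*m) (by omega : 2*m ≤ 2*m+s),
      ← Finset.range_eq_Ico]
  rw [hsplit]
  by_cases him : i < 2*m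
  · rw [if_pos him]
    have h1 : ∀ k ∈ range (2*m), aEnt m i k * c k = if k = partner i then c k else 0 := by
      intro k hk
      simp only [mem_range] at hk
      unfold aEnt partner
      split_ifs <;> (try ring) <;> (exfalso; omega)
    have h2 : ∀ k ∈ Ico (2*m) (2*m+s), aEnt m i k * c k = c k := by
      intro k hk
      simp only [mem_Ico] at hk
      unfold aEnt
      rw [if_pos ⟨by omega, Or.inr (Or.inl ⟨him, by omega⟩)⟩, one_mul]
    rw [Finset.sum_congr rfl h1, Finset.sum_congr rfl h2, Finset.sum_ite_eq']
    rw [if_pos (by simp only [mem_range]; exact partner_lt him)]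
  · rw [if_neg him]
    have h1 : ∀ k ∈ range (2*m), aEnt m i k * c k = c k := by
      intro k hk
      simp only [mem_range] at hk
      unfold aEnt
      rw [if_pos ⟨by omega, Or.inr (Or.inr ⟨by omega, hk⟩)⟩, one_mul]
    have h2 : ∀ k ∈ Ico (2*m) (2*m+s), aEnt m i k * c k = 0 := by
      intro k hk
      simp only [mem_Ico] at hk
      unfold aEnt
      rw [if_neg (by push_neg; intro _; omega), zero_mul]
    rw [Finset.sum_congr rfl h1, Finset.sum_congr rfl h2, Finset.sum_const, smul_zero, add_zero]

lemma sum_split (m s : ℕ) (c : ℕ → ℝ) :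
    ∑ k ∈ range (2*m+s), c k = ∑ k ∈ range (2*m), c k + ∑ k ∈ Ico (2*m) (2*m+s), c k := by
  rw [Finset.range_eq_Ico,
    ← Finset.sum_Ico_consecutive _ (by omega : 0 ≤ 2*m) (by omega : 2*m ≤ 2*m+s),
    ← Finset.range_eq_Ico]

/- partner values -/
lemma colW_partner (m : ℕ) (θ : ℝ) {i : ℕ} (hi : i < 2*m) : colW m θ (partner i) = θ := by
  unfold colW partner; split_ifs <;> (try rfl) <;> (exfalso; omega)

lemma colU_partner (m k : ℕ) {i : ℕ} (hi : i < 2*m) : colU m k (partner i) = colU m k i := by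
  unfold colU partner
  have h2 : (if i % 2 = 0 then i + 1 else i - 1) / 2 = i / 2 := by split_ifs <;> omega
  rw [h2]
  split_ifs <;> (try rfl) <;> (exfalso; omega)

lemma colZ_partner (m t : ℕ) {i : ℕ} (hi : i < 2*m) : colZ m t (partner i) = 0 := by
  unfold colZ partner; split_ifs <;> (try rfl) <;> (exfalso; omega)

lemma colV_partner (k : ℕ) {i m : ℕ} (hi : i < 2*m) (hk : k < m) :
    colV k (partner i) = -colV k i := by
  unfold colV partner; split_ifs <;> (try norm_num) <;> omega

lemma colZ_matched (m t : ℕ) {i : ℕ} (hi : i < 2*m) : colZ m t i = 0 := by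
  unfold colZ; rw [if_pos hi]

/- sums over the unmatched range -/
lemma sum_Ico_colW (m s : ℕ) (θ : ℝ) :
    ∑ k ∈ Ico (2*m) (2*m+s), colW m θ k = (s:ℝ) * (2*m:ℝ) := by
  have : ∀ k ∈ Ico (2*m) (2*m+s), colW m θ k = (2*m:ℝ) := by
    intro k hk; simp only [mem_Ico] at hk; unfold colW; rw [if_neg (by omega)]
  rw [Finset.sum_congr rfl this, Finset.sum_const, Nat.card_Ico, nsmul_eq_mul,
    (by omega : 2*m+s - 2*m = s)]
  try (push_cast; ring)

lemma sum_Ico_colU (m s k : ℕ) :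
    ∑ i ∈ Ico (2*m) (2*m+s), colU m k i = 0 := by
  have : ∀ i ∈ Ico (2*m) (2*m+s), colU m k i = 0 := by
    intro i hi; simp only [mem_Ico] at hi; unfold colU; rw [if_neg (by omega)]
  rw [Finset.sum_congr rfl this, Finset.sum_const, smul_zero]

lemma sum_Ico_colZ (m s t : ℕ) (ht : t < s) :
    ∑ i ∈ Ico (2*m) (2*m+s), colZ m t i = 0 := by
  rw [Finset.sum_Ico_eq_sum_range]
  have h1 : 2*m+s-2*m = s := by omega
  rw [h1]
  have : ∀ u ∈ range s, colZ m t (2*m+u) = helm t u := by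
    intro u hu; unfold colZ; rw [if_neg (by omega)]
    congr 1; omega
  rw [Finset.sum_congr rfl this, sum_helm t s ht]

lemma sum_Ico_colV (m s k : ℕ) (hk : k < m) :
    ∑ i ∈ Ico (2*m) (2*m+s), colV k i = 0 := by
  have : ∀ i ∈ Ico (2*m) (2*m+s), colV k i = 0 := by
    intro i hi; simp only [mem_Ico] at hi; unfold colV
    rw [if_neg (by omega), if_neg (by omega)]
  rw [Finset.sum_congr rfl this, Finset.sum_const, smul_zero]

/- sums over the matched range -/
lemma sum_range_colW (m : ℕ) (θ : ℝ) :
    ∑ k ∈ range (2*m), colW m θ k = (2*m:ℝ) * θ := by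
  have : ∀ k ∈ range (2*m), colW m θ k = θ := by
    intro k hk; simp only [mem_range] at hk; unfold colW; rw [if_pos hk]
  rw [Finset.sum_congr rfl this, Finset.sum_const, Finset.card_range, nsmul_eq_mul]
  push_cast; ring

lemma sum_range_colU (m k : ℕ) (hk : k < m) :
    ∑ i ∈ range (2*m), colU m k i = 0 := by
  have : ∀ i ∈ range (2*m), colU m k i = helm k (i/2) := by
    intro i hi; simp only [mem_range] at hi; unfold colU; rw [if_pos hi]
  rw [Finset.sum_congr rfl this, sum_pairs, sum_helm k m hk, mul_zero]

lemma sum_range_colZ (m t : ℕ) :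
    ∑ i ∈ range (2*m), colZ m t i = 0 := by
  have : ∀ i ∈ range (2*m), colZ m t i = 0 := by
    intro i hi; simp only [mem_range] at hi; unfold colZ; rw [if_pos hi]
  rw [Finset.sum_congr rfl this, Finset.sum_const, smul_zero]

lemma sum_range_colV (m k : ℕ) (hk : k < m) :
    ∑ i ∈ range (2*m), colV k i = 0 := by
  have : ∀ i ∈ range (2*m), colV k i = (fun _ => (1:ℝ)) i * colV k i := by
    intro i _; simp
  rw [Finset.sum_congr rfl this, sum_colV _ _ _ (by omega)]
  ring

lemma ip_WW (m s : ℕ) (θ θ' : ℝ) :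
    ∑ i ∈ range (2*m+s), colW m θ i * colW m θ' i
      = (2*m:ℝ) * (θ*θ') + (s:ℝ) * (2*m:ℝ)^2 := by
  rw [sum_split]
  have h1 : ∀ i ∈ range (2*m), colW m θ i * colW m θ' i = θ * θ' := by
    intro i hi; simp only [mem_range] at hi; unfold colW; rw [if_pos hi, if_pos hi]
  have h2 : ∀ i ∈ Ico (2*m) (2*m+s), colW m θ i * colW m θ' i = (2*m:ℝ)^2 := by
    intro i hi; simp only [mem_Ico] at hi; unfold colW
    rw [if_neg (by omega), if_neg (by omega)]; ring
  rw [Finset.sum_congr rfl h1, Finset.sum_congr rfl h2, Finset.sum_const, Finset.sum_const,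
    Nat.card_Ico, Finset.card_range, (by omega : 2*m+s - 2*m = s), nsmul_eq_mul, nsmul_eq_mul]
  push_cast; ring

lemma ip_WU (m s k : ℕ) (θ : ℝ) (hk : k < m) :
    ∑ i ∈ range (2*m+s), colW m θ i * colU m k i = 0 := by
  rw [sum_split]
  have h1 : ∀ i ∈ range (2*m), colW m θ i * colU m k i = θ * helm k (i/2) := by
    intro i hi; simp only [mem_range] at hi; unfold colW colU; rw [if_pos hi, if_pos hi]
  have h2 : ∀ i ∈ Ico (2*m) (2*m+s), colW m θ i * colU m k i = 0 := by
    intro i hi; simp only [mem_Ico] at hi; unfold colU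
    rw [if_neg (by omega), mul_zero]
  rw [Finset.sum_congr rfl h1, Finset.sum_congr rfl h2,
    sum_pairs (fun p => θ * helm k p) m, ← Finset.mul_sum, sum_helm k m hk,
    Finset.sum_const, smul_zero]
  ring

lemma ip_WZ (m s t : ℕ) (θ : ℝ) (ht : t < s) :
    ∑ i ∈ range (2*m+s), colW m θ i * colZ m t i = 0 := by
  rw [sum_split]
  have h1 : ∀ i ∈ range (2*m), colW m θ i * colZ m t i = 0 := by
    intro i hi; simp only [mem_range] at hi; unfold colZ; rw [if_pos hi, mul_zero]
  have h2 : ∀ i ∈ Ico (2*m) (2*m+s), colW m θ i * colZ m t i = (2*m:ℝ) * colZ m t i := by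
    intro i hi; simp only [mem_Ico] at hi; unfold colW; rw [if_neg (by omega)]
  rw [Finset.sum_congr rfl h1, Finset.sum_congr rfl h2, ← Finset.mul_sum,
    sum_Ico_colZ m s t ht, Finset.sum_const, smul_zero, mul_zero, add_zero]

lemma ip_WV (m s k : ℕ) (θ : ℝ) (hk : k < m) :
    ∑ i ∈ range (2*m+s), colW m θ i * colV k i = 0 := by
  rw [sum_colV _ _ _ (by omega)]
  unfold colW
  rw [if_pos (by omega), if_pos (by omega), sub_self]

lemma ip_UU (m s k k' : ℕ) (hk : k < k') (hk' : k' < m) :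
    ∑ i ∈ range (2*m+s), colU m k i * colU m k' i = 0 := by
  rw [sum_split]
  have h1 : ∀ i ∈ range (2*m), colU m k i * colU m k' i
      = helm k (i/2) * helm k' (i/2) := by
    intro i hi; simp only [mem_range] at hi; unfold colU; rw [if_pos hi, if_pos hi]
  have h2 : ∀ i ∈ Ico (2*m) (2*m+s), colU m k i * colU m k' i = 0 := by
    intro i hi; simp only [mem_Ico] at hi; unfold colU
    rw [if_neg (by omega), zero_mul]
  rw [Finset.sum_congr rfl h1, Finset.sum_congr rfl h2,
    sum_pairs (fun p => helm k p * helm k' p) m,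
    sum_helm_mul k k' m hk hk', Finset.sum_const, smul_zero]
  ring

lemma ip_UU_diag (m s k : ℕ) (hk : k < m) :
    ∑ i ∈ range (2*m+s), colU m k i * colU m k i = 2*((k:ℝ) + (k:ℝ)^2) := by
  rw [sum_split]
  have h1 : ∀ i ∈ range (2*m), colU m k i * colU m k i
      = helm k (i/2) * helm k (i/2) := by
    intro i hi; simp only [mem_range] at hi; unfold colU; rw [if_pos hi]
  have h2 : ∀ i ∈ Ico (2*m) (2*m+s), colU m k i * colU m k i = 0 := by
    intro i hi; simp only [mem_Ico] at hi; unfold colU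
    rw [if_neg (by omega), zero_mul]
  rw [Finset.sum_congr rfl h1, Finset.sum_congr rfl h2,
    sum_pairs (fun p => helm k p * helm k p) m,
    sum_helm_sq k m hk, Finset.sum_const, smul_zero, add_zero]

lemma ip_UZ (m s k t : ℕ) :
    ∑ i ∈ range (2*m+s), colU m k i * colZ m t i = 0 := by
  have h : ∀ i ∈ range (2*m+s), colU m k i * colZ m t i = 0 := by
    intro i hi
    unfold colU colZ
    by_cases him : i < 2*m
    · rw [if_pos him, if_pos him, mul_zero]
    · rw [if_neg him, zero_mul]
  rw [Finset.sum_congr rfl h, Finset.sum_const, smul_zero]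

lemma ip_UV (m s k j : ℕ) (hj : j < m) :
    ∑ i ∈ range (2*m+s), colU m k i * colV j i = 0 := by
  rw [sum_colV _ _ _ (by omega)]
  unfold colU
  rw [if_pos (by omega), if_pos (by omega),
    (by omega : 2*j/2 = j), (by omega : (2*j+1)/2 = j), sub_self]

lemma ip_ZZ (m s t t' : ℕ) (ht : t < t') (ht' : t' < s) :
    ∑ i ∈ range (2*m+s), colZ m t i * colZ m t' i = 0 := by
  rw [sum_split]
  have h1 : ∀ i ∈ range (2*m), colZ m t i * colZ m t' i = 0 := by
    intro i hi; simp only [mem_range] at hi; unfold colZ; rw [if_pos hi, zero_mul]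
  rw [Finset.sum_congr rfl h1, Finset.sum_const, smul_zero, zero_add,
    Finset.sum_Ico_eq_sum_range, (by omega : 2*m+s - 2*m = s)]
  have h2 : ∀ u ∈ range s, colZ m t (2*m+u) * colZ m t' (2*m+u) = helm t u * helm t' u := by
    intro u hu; unfold colZ
    rw [if_neg (by omega), if_neg (by omega), (by omega : 2*m+u - 2*m = u)]
  rw [Finset.sum_congr rfl h2, sum_helm_mul t t' s ht ht']

lemma ip_ZZ_diag (m s t : ℕ) (ht : t < s) :
    ∑ i ∈ range (2*m+s), colZ m t i * colZ m t i = (t:ℝ) + (t:ℝ)^2 := by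
  rw [sum_split]
  have h1 : ∀ i ∈ range (2*m), colZ m t i * colZ m t i = 0 := by
    intro i hi; simp only [mem_range] at hi; unfold colZ; rw [if_pos hi, zero_mul]
  rw [Finset.sum_congr rfl h1, Finset.sum_const, smul_zero, zero_add,
    Finset.sum_Ico_eq_sum_range, (by omega : 2*m+s - 2*m = s)]
  have h2 : ∀ u ∈ range s, colZ m t (2*m+u) * colZ m t (2*m+u) = helm t u * helm t u := by
    intro u hu; unfold colZ
    rw [if_neg (by omega), (by omega : 2*m+u - 2*m = u)]
  rw [Finset.sum_congr rfl h2, sum_helm_sq t s ht]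

lemma ip_ZV (m s t j : ℕ) (hj : j < m) :
    ∑ i ∈ range (2*m+s), colZ m t i * colV j i = 0 := by
  have h : ∀ i ∈ range (2*m+s), colZ m t i * colV j i = 0 := by
    intro i hi
    unfold colZ colV
    by_cases him : i < 2*m
    · rw [if_pos him, zero_mul]
    · rw [if_neg (by omega), if_neg (by omega), if_neg (by omega), mul_zero]
  rw [Finset.sum_congr rfl h, Finset.sum_const, smul_zero]

lemma ip_VV (m s k j : ℕ) (hk : k < m) (hj : j < m) (hkj : k ≠ j) :
    ∑ i ∈ range (2*m+s), colV k i * colV j i = 0 := by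
  rw [sum_colV _ _ _ (by omega)]
  unfold colV
  rw [if_neg (by omega), if_neg (by omega), if_neg (by omega), if_neg (by omega), sub_self]

lemma ip_VV_diag (m s j : ℕ) (hj : j < m) :
    ∑ i ∈ range (2*m+s), colV j i * colV j i = 2 := by
  rw [sum_colV _ _ _ (by omega)]
  unfold colV
  rw [if_pos rfl, if_neg (by omega), if_pos rfl]
  ring

lemma charpoly_similar {n : Type*} [DecidableEq n] [Fintype n]
    (A B P : Matrix n n ℝ) (hP : IsUnit P.det) (h : A * P = P * B) :
    A.charpoly = B.charpoly := by
  have hPc : IsUnit (((Polynomial.C : ℝ →+* ℝ[X]).mapMatrix P).det) := by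
    rw [← RingHom.map_det]
    exact hP.map _
  have key : charmatrix A * (Polynomial.C : ℝ →+* ℝ[X]).mapMatrix P
      = (Polynomial.C : ℝ →+* ℝ[X]).mapMatrix P * charmatrix B := by
    unfold charmatrix
    rw [sub_mul, mul_sub, ← _root_.map_mul, ← _root_.map_mul, h]
    congr 1
    exact (Matrix.scalar_commute (X : ℝ[X]) (fun r' => Commute.all _ _) _).eq
  have := congrArg Matrix.det key
  rw [det_mul, det_mul] at this
  unfold Matrix.charpoly
  exact hPc.mul_left_cancel (by rw [← this, mul_comm])

lemma charpoly_diagonal {n : Type*} [DecidableEq n] [Fintype n] (d : n → ℝ) :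
    (Matrix.diagonal d).charpoly = ∏ i, (X - Polynomial.C (d i)) := by
  have : charmatrix (Matrix.diagonal d) = Matrix.diagonal (fun i => X - Polynomial.C (d i)) := by
    ext i j
    by_cases hij : i = j
    · subst hij; simp
    · rw [charmatrix_apply_ne _ _ _ hij, Matrix.diagonal_apply_ne _ hij,
        Matrix.diagonal_apply_ne _ hij, map_zero, neg_zero]
  rw [Matrix.charpoly, this, det_diagonal]

lemma hA_entry (m s : ℕ) (i k : Fin (2*m+s)) :
    (dimJoin m s).adjMatrix ℝ i k = aEnt m i.val k.val := by
  rw [SimpleGraph.adjMatrix_apply]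
  unfold aEnt
  by_cases h : (dimJoin m s).Adj i k
  · rw [if_pos h]
    obtain ⟨h1, h2⟩ := (h : i ≠ k ∧ _)
    rw [if_pos ⟨fun he => h1 (Fin.ext he), h2⟩]
  · rw [if_neg h]
    rw [if_neg (fun hc => h (show i ≠ k ∧ _ from ⟨fun he => hc.1 (congrArg Fin.val he), hc.2⟩))]

lemma eigenEq (m s : ℕ) (hm : 1 ≤ m) (hs : 1 ≤ s) (θp θn : ℝ)
    (hθp : θp^2 = θp + 2*(m:ℝ)*s) (hθn : θn^2 = θn + 2*(m:ℝ)*s) :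
    (dimJoin m s).adjMatrix ℝ * (Matrix.of fun i j : Fin (2*m+s) => pEnt m s θp θn i.val j.val)
      = (Matrix.of fun i j : Fin (2*m+s) => pEnt m s θp θn i.val j.val)
        * Matrix.diagonal (fun j : Fin (2*m+s) => dEnt m s θp θn j.val) := by
  ext i j
  rw [Matrix.mul_apply, Matrix.mul_diagonal, Matrix.of_apply]
  have hsum : ∀ k : Fin (2*m+s), (dimJoin m s).adjMatrix ℝ i k
      * (Matrix.of fun i j : Fin (2*m+s) => pEnt m s θp θn i.val j.val) k j
      = aEnt m i.val k.val * pEnt m s θp θn k.val j.val := by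
    intro k; rw [hA_entry m s i k]; rfl
  rw [Finset.sum_congr rfl (fun k _ => hsum k),
    Fin.sum_univ_eq_sum_range (fun kv => aEnt m ↑i kv * pEnt m s θp θn kv ↑j) (2*m+s),
    rowSumA m s i.val i.isLt]
  have hj5 : (j:ℕ) < 2*m+s := j.isLt
  by_cases hj0 : (j:ℕ) = 0
  · have hpe : ∀ kv, pEnt m s θp θn kv ↑j = colW m θp kv := fun kv => by
      unfold pEnt; rw [if_pos hj0]
    have hde : dEnt m s θp θn ↑j = θp := by unfold dEnt; rw [if_pos hj0]
    simp only [hpe, hde]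
    by_cases him : (i:ℕ) < 2*m
    · rw [if_pos him, colW_partner m θp him, sum_Ico_colW m s θp]
      unfold colW; rw [if_pos him]
      linear_combination -hθp
    · rw [if_neg him, sum_range_colW m θp]
      unfold colW; rw [if_neg him]
  · by_cases hj1 : (j:ℕ) = 1
    · have hpe : ∀ kv, pEnt m s θp θn kv ↑j = colW m θn kv := fun kv => by
        unfold pEnt; rw [if_neg hj0, if_pos hj1]
      have hde : dEnt m s θp θn ↑j = θn := by unfold dEnt; rw [if_neg hj0, if_pos hj1]
      simp only [hpe, hde]
      by_cases him : (i:ℕ) < 2*m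
      · rw [if_pos him, colW_partner m θn him, sum_Ico_colW m s θn]
        unfold colW; rw [if_pos him]
        linear_combination -hθn
      · rw [if_neg him, sum_range_colW m θn]
        unfold colW; rw [if_neg him]
    · by_cases hjU : (j:ℕ) < m + 1
      · have hk : (j:ℕ) - 1 < m := by omega
        have hpe : ∀ kv, pEnt m s θp θn kv ↑j = colU m ((j:ℕ)-1) kv := fun kv => by
          unfold pEnt; rw [if_neg hj0, if_neg hj1, if_pos hjU]
        have hde : dEnt m s θp θn ↑j = 1 := by
          unfold dEnt; rw [if_neg hj0, if_neg hj1, if_pos hjU]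
        simp only [hpe, hde]
        by_cases him : (i:ℕ) < 2*m
        · rw [if_pos him, colU_partner m _ him, sum_Ico_colU m s _]
          ring
        · rw [if_neg him, sum_range_colU m _ hk]
          unfold colU; rw [if_neg him]; ring
      · by_cases hjZ : (j:ℕ) < m + s
        · have ht : (j:ℕ) - m < s := by omega
          have hpe : ∀ kv, pEnt m s θp θn kv ↑j = colZ m ((j:ℕ)-m) kv := fun kv => by
            unfold pEnt; rw [if_neg hj0, if_neg hj1, if_neg hjU, if_pos hjZ]
          have hde : dEnt m s θp θn ↑j = 0 := by
            unfold dEnt; rw [if_neg hj0, if_neg hj1, if_neg hjU, if_pos hjZ]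
          simp only [hpe, hde]
          by_cases him : (i:ℕ) < 2*m
          · rw [if_pos him, colZ_partner m _ him, sum_Ico_colZ m s _ ht]
            ring
          · rw [if_neg him, sum_range_colZ m _]
            ring
        · have hk : (j:ℕ) - (m+s) < m := by omega
          have hpe : ∀ kv, pEnt m s θp θn kv ↑j = colV ((j:ℕ)-(m+s)) kv := fun kv => by
            unfold pEnt; rw [if_neg hj0, if_neg hj1, if_neg hjU, if_neg hjZ]
          have hde : dEnt m s θp θn ↑j = -1 := by
            unfold dEnt; rw [if_neg hj0, if_neg hj1, if_neg hjU, if_neg hjZ]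
          simp only [hpe, hde]
          by_cases him : (i:ℕ) < 2*m
          · rw [if_pos him, colV_partner _ him hk, sum_Ico_colV m s _ hk]
            ring
          · rw [if_neg him, sum_range_colV m _ hk]
            unfold colV
            rw [if_neg (by omega), if_neg (by omega)]
            ring

lemma gram_entry (m s : ℕ) (hm : 1 ≤ m) (hs : 1 ≤ s) (θp θn : ℝ)
    (hpn : θp * θn = -(2*(m:ℝ)*s)) (j j' : ℕ) (hj : j < 2*m+s) (hj' : j' < 2*m+s)
    (hle : j ≤ j') :
    ∑ iv ∈ range (2*m+s), pEnt m s θp θn iv j * pEnt m s θp θn iv j'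
      = if j = j' then nEnt m s θp θn j else 0 := by
  by_cases hj0 : j = 0
  · have hpe : ∀ iv, pEnt m s θp θn iv j = colW m θp iv := fun iv => by
      unfold pEnt; rw [if_pos hj0]
    simp only [hpe]
    by_cases hj'0 : j' = 0
    · have hpe' : ∀ iv, pEnt m s θp θn iv j' = colW m θp iv := fun iv => by
        unfold pEnt; rw [if_pos hj'0]
      simp only [hpe', ip_WW]
      rw [if_pos (by omega), hj0]
      unfold nEnt; rw [if_pos rfl]
      push_cast; ring
    · rw [if_neg (by omega)]
      by_cases hj'1 : j' = 1
      · have hpe' : ∀ iv, pEnt m s θp θn iv j' = colW m θn iv := fun iv => by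
          unfold pEnt; rw [if_neg hj'0, if_pos hj'1]
        simp only [hpe', ip_WW]
        linear_combination (2*(m:ℝ)) * hpn
      · by_cases hj'U : j' < m + 1
        · have hpe' : ∀ iv, pEnt m s θp θn iv j' = colU m (j'-1) iv := fun iv => by
            unfold pEnt; rw [if_neg hj'0, if_neg hj'1, if_pos hj'U]
          simp only [hpe']
          exact ip_WU m s (j'-1) θp (by omega)
        · by_cases hj'Z : j' < m + s
          · have hpe' : ∀ iv, pEnt m s θp θn iv j' = colZ m (j'-m) iv := fun iv => by
              unfold pEnt; rw [if_neg hj'0, if_neg hj'1, if_neg hj'U, if_pos hj'Z]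
            simp only [hpe']
            exact ip_WZ m s (j'-m) θp (by omega)
          · have hpe' : ∀ iv, pEnt m s θp θn iv j' = colV (j'-(m+s)) iv := fun iv => by
              unfold pEnt; rw [if_neg hj'0, if_neg hj'1, if_neg hj'U, if_neg hj'Z]
            simp only [hpe']
            exact ip_WV m s (j'-(m+s)) θp (by omega)
  · by_cases hj1 : j = 1
    · have hpe : ∀ iv, pEnt m s θp θn iv j = colW m θn iv := fun iv => by
        unfold pEnt; rw [if_neg hj0, if_pos hj1]
      simp only [hpe]
      by_cases hj'1 : j' = 1
      · have hpe' : ∀ iv, pEnt m s θp θn iv j' = colW m θn iv := fun iv => by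
          unfold pEnt; rw [if_neg (by omega), if_pos hj'1]
        simp only [hpe', ip_WW]
        rw [if_pos (by omega), hj1]
        unfold nEnt; rw [if_neg (by omega), if_pos rfl]
        push_cast; ring
      · rw [if_neg (by omega)]
        by_cases hj'U : j' < m + 1
        · have hpe' : ∀ iv, pEnt m s θp θn iv j' = colU m (j'-1) iv := fun iv => by
            unfold pEnt; rw [if_neg (by omega), if_neg hj'1, if_pos hj'U]
          simp only [hpe']
          exact ip_WU m s (j'-1) θn (by omega)
        · by_cases hj'Z : j' < m + s
          · have hpe' : ∀ iv, pEnt m s θp θn iv j' = colZ m (j'-m) iv := fun iv => by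
              unfold pEnt; rw [if_neg (by omega), if_neg hj'1, if_neg hj'U, if_pos hj'Z]
            simp only [hpe']
            exact ip_WZ m s (j'-m) θn (by omega)
          · have hpe' : ∀ iv, pEnt m s θp θn iv j' = colV (j'-(m+s)) iv := fun iv => by
              unfold pEnt; rw [if_neg (by omega), if_neg hj'1, if_neg hj'U, if_neg hj'Z]
            simp only [hpe']
            exact ip_WV m s (j'-(m+s)) θn (by omega)
    · by_cases hjU : j < m + 1
      · have hpe : ∀ iv, pEnt m s θp θn iv j = colU m (j-1) iv := fun iv => by
          unfold pEnt; rw [if_neg hj0, if_neg hj1, if_pos hjU]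
        simp only [hpe]
        by_cases hj'U : j' < m + 1
        · have hpe' : ∀ iv, pEnt m s θp θn iv j' = colU m (j'-1) iv := fun iv => by
            unfold pEnt; rw [if_neg (by omega), if_neg (by omega), if_pos hj'U]
          simp only [hpe']
          by_cases hjj : j = j'
          · rw [if_pos hjj, hjj]
            have := ip_UU_diag m s (j'-1) (by omega)
            rw [this]
            unfold nEnt
            rw [if_neg (by omega), if_neg (by omega), if_pos hj'U]
          · rw [if_neg hjj]
            exact ip_UU m s (j-1) (j'-1) (by omega) (by omega)
        · rw [if_neg (by omega)]
          by_cases hj'Z : j' < m + s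
          · have hpe' : ∀ iv, pEnt m s θp θn iv j' = colZ m (j'-m) iv := fun iv => by
              unfold pEnt; rw [if_neg (by omega), if_neg (by omega), if_neg hj'U, if_pos hj'Z]
            simp only [hpe']
            exact ip_UZ m s (j-1) (j'-m)
          · have hpe' : ∀ iv, pEnt m s θp θn iv j' = colV (j'-(m+s)) iv := fun iv => by
              unfold pEnt; rw [if_neg (by omega), if_neg (by omega), if_neg hj'U, if_neg hj'Z]
            simp only [hpe']
            exact ip_UV m s (j-1) (j'-(m+s)) (by omega)
      · by_cases hjZ : j < m + s
        · have hpe : ∀ iv, pEnt m s θp θn iv j = colZ m (j-m) iv := fun iv => by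
            unfold pEnt; rw [if_neg hj0, if_neg hj1, if_neg hjU, if_pos hjZ]
          simp only [hpe]
          by_cases hj'Z : j' < m + s
          · have hpe' : ∀ iv, pEnt m s θp θn iv j' = colZ m (j'-m) iv := fun iv => by
              unfold pEnt; rw [if_neg (by omega), if_neg (by omega), if_neg (by omega), if_pos hj'Z]
            simp only [hpe']
            by_cases hjj : j = j'
            · rw [if_pos hjj, hjj]
              rw [ip_ZZ_diag m s (j'-m) (by omega)]
              unfold nEnt
              rw [if_neg (by omega), if_neg (by omega), if_neg (by omega), if_pos hj'Z]
            · rw [if_neg hjj]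
              exact ip_ZZ m s (j-m) (j'-m) (by omega) (by omega)
          · rw [if_neg (by omega)]
            have hpe' : ∀ iv, pEnt m s θp θn iv j' = colV (j'-(m+s)) iv := fun iv => by
              unfold pEnt; rw [if_neg (by omega), if_neg (by omega), if_neg (by omega), if_neg hj'Z]
            simp only [hpe']
            exact ip_ZV m s (j-m) (j'-(m+s)) (by omega)
        · have hpe : ∀ iv, pEnt m s θp θn iv j = colV (j-(m+s)) iv := fun iv => by
            unfold pEnt; rw [if_neg hj0, if_neg hj1, if_neg hjU, if_neg hjZ]
          simp only [hpe]
          have hpe' : ∀ iv, pEnt m s θp θn iv j' = colV (j'-(m+s)) iv := fun iv => by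
            unfold pEnt; rw [if_neg (by omega), if_neg (by omega), if_neg (by omega), if_neg (by omega)]
          simp only [hpe']
          by_cases hjj : j = j'
          · rw [if_pos hjj, hjj, ip_VV_diag m s (j'-(m+s)) (by omega)]
            unfold nEnt
            rw [if_neg (by omega), if_neg (by omega), if_neg (by omega), if_neg (by omega)]
          · rw [if_neg hjj]
            exact ip_VV m s (j-(m+s)) (j'-(m+s)) (by omega) (by omega) (by omega)

lemma gramEq (m s : ℕ) (hm : 1 ≤ m) (hs : 1 ≤ s) (θp θn : ℝ)
    (hpn : θp * θn = -(2*(m:ℝ)*s)) :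
    (Matrix.of fun i j : Fin (2*m+s) => pEnt m s θp θn i.val j.val)ᵀ
      * (Matrix.of fun i j : Fin (2*m+s) => pEnt m s θp θn i.val j.val)
      = Matrix.diagonal (fun j : Fin (2*m+s) => nEnt m s θp θn j.val) := by
  ext j j'
  rw [Matrix.mul_apply]
  simp only [Matrix.transpose_apply, Matrix.of_apply]
  rw [Fin.sum_univ_eq_sum_range (fun iv => pEnt m s θp θn iv ↑j * pEnt m s θp θn iv ↑j') (2*m+s),
    Matrix.diagonal_apply]
  rcases le_total (↑j : ℕ) (↑j' : ℕ) with h | h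
  · rw [gram_entry m s hm hs θp θn hpn ↑j ↑j' j.isLt j'.isLt h]
    by_cases e : j = j'
    · rw [if_pos (congrArg Fin.val e), if_pos e]
    · rw [if_neg (fun he => e (Fin.ext he)), if_neg e]
  · rw [Finset.sum_congr rfl
      (fun iv _ => mul_comm (pEnt m s θp θn iv ↑j) (pEnt m s θp θn iv ↑j')),
      gram_entry m s hm hs θp θn hpn ↑j' ↑j j'.isLt j.isLt h]
    by_cases e : j = j'
    · rw [if_pos (congrArg Fin.val e.symm), if_pos e, e]
    · rw [if_neg (fun he => e (Fin.ext he.symm)), if_neg e]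

lemma nEnt_pos (m s : ℕ) (hm : 1 ≤ m) (hs : 1 ≤ s) (θp θn : ℝ) (j : ℕ) :
    0 < nEnt m s θp θn j := by
  have hm' : (1:ℝ) ≤ m := by exact_mod_cast hm
  have hs' : (1:ℝ) ≤ s := by exact_mod_cast hs
  unfold nEnt
  split_ifs with h0 h1 hU hZ
  · nlinarith [sq_nonneg θp]
  · nlinarith [sq_nonneg θn]
  · have : (1:ℝ) ≤ ((j-1 : ℕ):ℝ) := by exact_mod_cast (by omega : 1 ≤ j - 1)
    nlinarith
  · have : (1:ℝ) ≤ ((j-m : ℕ):ℝ) := by exact_mod_cast (by omega : 1 ≤ j - m)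
    nlinarith
  · norm_num

lemma spectrum_multiset (m s : ℕ) (hm : 1 ≤ m) (hs : 1 ≤ s) (θp θn : ℝ) :
    ((Finset.univ.val : Multiset (Fin (2*m+s))).map fun i => dEnt m s θp θn i.val)
      = ({θp, θn} : Multiset ℝ) + Multiset.replicate (m-1) 1
        + Multiset.replicate (s-1) 0 + Multiset.replicate m (-1) := by
  have h1 : ((Finset.univ.val : Multiset (Fin (2*m+s))).map fun i => dEnt m s θp θn i.val)
      = (Multiset.range (2*m+s)).map (dEnt m s θp θn) := by
    rw [show (fun i : Fin (2*m+s) => dEnt m s θp θn i.val)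
        = (dEnt m s θp θn) ∘ Fin.val from rfl, ← Multiset.map_map]
    congr 1
    rw [show ((Finset.univ.val : Multiset (Fin (2*m+s))).map Fin.val)
        = (Finset.univ.map Fin.valEmbedding).val from rfl,
      Fin.map_valEmbedding_univ, Nat.Iio_eq_range, Finset.range_val]
  have hB1 : (Multiset.range 2).map (dEnt m s θp θn) = ({θp, θn} : Multiset ℝ) := by
    have h2 : Multiset.range 2 = (0 : ℕ) ::ₘ (1 : ℕ) ::ₘ 0 := by decide
    rw [h2, Multiset.map_cons, Multiset.map_cons, Multiset.map_zero]
    have d0 : dEnt m s θp θn 0 = θp := by unfold dEnt; rw [if_pos rfl]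
    have d1 : dEnt m s θp θn 1 = θn := by
      unfold dEnt; rw [if_neg (by omega), if_pos rfl]
    rw [d0, d1]
    rfl
  have hB2 : ((Multiset.range (m-1)).map (fun x => 2 + x)).map (dEnt m s θp θn)
      = Multiset.replicate (m-1) (1:ℝ) := by
    refine Multiset.eq_replicate.2 ⟨by simp, fun b hb => ?_⟩
    simp only [Multiset.mem_map, Multiset.mem_range] at hb
    obtain ⟨a, ⟨x, hx, rfl⟩, rfl⟩ := hb
    unfold dEnt
    rw [if_neg (by omega), if_neg (by omega), if_pos (by omega)]
  have hB3 : ((Multiset.range (s-1)).map (fun x => 2 + (m-1) + x)).map (dEnt m s θp θn)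
      = Multiset.replicate (s-1) (0:ℝ) := by
    refine Multiset.eq_replicate.2 ⟨by simp, fun b hb => ?_⟩
    simp only [Multiset.mem_map, Multiset.mem_range] at hb
    obtain ⟨a, ⟨x, hx, rfl⟩, rfl⟩ := hb
    unfold dEnt
    rw [if_neg (by omega), if_neg (by omega), if_neg (by omega), if_pos (by omega)]
  have hB4 : ((Multiset.range m).map (fun x => 2 + (m-1) + (s-1) + x)).map (dEnt m s θp θn)
      = Multiset.replicate m (-1:ℝ) := by
    refine Multiset.eq_replicate.2 ⟨by simp, fun b hb => ?_⟩
    simp only [Multiset.mem_map, Multiset.mem_range] at hb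
    obtain ⟨a, ⟨x, hx, rfl⟩, rfl⟩ := hb
    unfold dEnt
    rw [if_neg (by omega), if_neg (by omega), if_neg (by omega), if_neg (by omega)]
  rw [h1, show 2*m+s = 2+(m-1)+(s-1)+m by omega,
    Multiset.range_add, Multiset.range_add, Multiset.range_add,
    Multiset.map_add, Multiset.map_add, Multiset.map_add,
    hB1, hB2, hB3, hB4]

end

end DIM5

/-- Adjacency spectrum of `H = mK₂ ∨ \bar{K}_s` (`n = 2m+s`):
`{(1±√(1+8m(n−2m)))/2, 1^{[m−1]}, 0^{[n−2m−1]}, (−1)^{[m]}}`. -/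
theorem stmt_5 (m s : ℕ) (hm : 1 ≤ m) (hs : 1 ≤ s) :
    ((dimJoin m s).adjMatrix ℝ).charpoly.roots =
      {(1 + Real.sqrt (1 + 8 * m * (((2 * m + s : ℕ) : ℝ) - 2 * m))) / 2,
       (1 - Real.sqrt (1 + 8 * m * (((2 * m + s : ℕ) : ℝ) - 2 * m))) / 2} +
      Multiset.replicate (m - 1) 1 + Multiset.replicate (s - 1) 0 +
      Multiset.replicate m (-1) := by
  have harg : (1:ℝ) + 8 * m * (((2 * m + s : ℕ) : ℝ) - 2 * m)
      = 1 + 8 * (m:ℝ) * (s:ℝ) := by push_cast; ring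
  rw [harg]
  set r := Real.sqrt (1 + 8 * (m:ℝ) * (s:ℝ)) with hrdef
  have hrsq : r^2 = 1 + 8 * (m:ℝ) * (s:ℝ) := Real.sq_sqrt (by positivity)
  set θp := (1 + r) / 2 with hθpdef
  set θn := (1 - r) / 2 with hθndef
  have hp2 : θp^2 = θp + 2*(m:ℝ)*s := by
    rw [hθpdef]; linear_combination hrsq / 4
  have hn2 : θn^2 = θn + 2*(m:ℝ)*s := by
    rw [hθndef]; linear_combination hrsq / 4
  have hpn : θp * θn = -(2*(m:ℝ)*s) := by
    rw [hθpdef, hθndef]; linear_combination (-1/4) * hrsq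
  set P := (Matrix.of fun i j : Fin (2*m+s) => DIM5.pEnt m s θp θn i.val j.val) with hPdef
  have hAP := DIM5.eigenEq m s hm hs θp θn hp2 hn2
  have hGram := DIM5.gramEq m s hm hs θp θn hpn
  have hdet : IsUnit P.det := by
    have hdd : P.det * P.det = ∏ j : Fin (2*m+s), DIM5.nEnt m s θp θn j.val := by
      have h := congrArg Matrix.det hGram
      rwa [Matrix.det_mul, Matrix.det_transpose, Matrix.det_diagonal] at h
    have hprod : 0 < ∏ j : Fin (2*m+s), DIM5.nEnt m s θp θn j.val :=
      Finset.prod_pos fun j _ => DIM5.nEnt_pos m s hm hs θp θn j.val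
    rw [isUnit_iff_ne_zero]
    intro h0
    rw [h0, mul_zero] at hdd
    exact absurd hdd.symm (ne_of_gt hprod)
  have hcp := DIM5.charpoly_similar ((dimJoin m s).adjMatrix ℝ)
    (Matrix.diagonal (fun j : Fin (2*m+s) => DIM5.dEnt m s θp θn j.val)) P hdet hAP
  rw [hcp, DIM5.charpoly_diagonal, Finset.prod_eq_multiset_prod,
    show ((Finset.univ.val : Multiset (Fin (2*m+s))).map
        fun i => Polynomial.X - Polynomial.C (DIM5.dEnt m s θp θn i.val))
      = (((Finset.univ.val : Multiset (Fin (2*m+s))).map fun i => DIM5.dEnt m s θp θn i.val).map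
          fun a => Polynomial.X - Polynomial.C a) by rw [Multiset.map_map]; rfl,
    Polynomial.roots_multiset_prod_X_sub_C,
    DIM5.spectrum_multiset m s hm hs θp θn]
end

section
/- Let H be the join of mK₂ with the empty graph on s = n−2m ≥ 1 vertices, m ≥ 1. Then the signless Laplacian spectrum of H is { (2+n+√((2+n)²−16m))/2, (2+n−√((2+n)²−16m))/2, (n−2m+2) with multiplicity m−1, (n−2m) with multiplicity m, 2m with multiplicity n−2m−1 }. -/
open Matrix Finset
open scoped Classical
open Polynomial

lemma charpoly_similar {n : Type*} [Fintype n] [DecidableEq n] {R : Type*} [CommRing R]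
    (M P Pi T : Matrix n n R) (h1 : Pi * P = 1) (h2 : M * P = P * T) :
    M.charpoly = T.charpoly := by
  have h1' : P * Pi = 1 := mul_eq_one_comm.mp h1
  have hT : T = Pi * M * P := by
    calc T = 1 * T := (one_mul T).symm
    _ = Pi * P * T := by rw [h1]
    _ = Pi * (P * T) := by rw [mul_assoc]
    _ = Pi * (M * P) := by rw [h2]
    _ = Pi * M * P := (mul_assoc _ _ _).symm
  rw [hT, Matrix.charpoly, Matrix.charpoly]
  have hmap1 : (1 : Matrix n n R).map (C : R → R[X]) = 1 := by
    ext i j; by_cases h : i = j <;> simp [Matrix.one_apply, h]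
  have key : charmatrix (Pi * M * P) =
      Pi.map C * charmatrix M * P.map C := by
    unfold charmatrix
    rw [RingHom.mapMatrix_apply, RingHom.mapMatrix_apply,
      Matrix.map_mul, Matrix.map_mul, Matrix.mul_sub, Matrix.sub_mul]
    congr 1
    have hc : Matrix.scalar n (X : R[X]) * Pi.map C = Pi.map C * Matrix.scalar n (X : R[X]) :=
      (Matrix.scalar_commute (X : R[X]) (fun r => Commute.all _ _) (Pi.map C)).eq
    rw [← hc, mul_assoc, ← Matrix.map_mul, h1, hmap1, mul_one]
  rw [key, Matrix.det_mul, Matrix.det_mul]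
  have : Pi.map (C : R → R[X]) * P.map C = 1 := by rw [← Matrix.map_mul, h1, hmap1]
  have hdet : (Pi.map (C : R → R[X])).det * (P.map C).det = 1 := by
    rw [← Matrix.det_mul, this, Matrix.det_one]
  rw [mul_comm ((Pi.map (C : R → R[X])).det) _, mul_assoc, hdet, mul_one]


lemma charpoly_diagonal {n : Type*} [Fintype n] [DecidableEq n] {R : Type*} [CommRing R]
    (d : n → R) : (Matrix.diagonal d).charpoly = ∏ i, (X - C (d i)) := by
  rw [Matrix.charpoly]
  have : charmatrix (Matrix.diagonal d) = Matrix.diagonal (fun i => (X : R[X]) - C (d i)) := by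
    ext i j
    by_cases h : i = j
    · subst h; simp [charmatrix_apply_eq]
    · simp [charmatrix_apply_ne _ _ _ h, Matrix.diagonal_apply_ne _ h]
  rw [this, Matrix.det_diagonal]

namespace Stmt7

/-- columns: col 0 = all ones; col k (k≠0) = e_k - e_0 -/
def Cmx (N : ℕ) : Matrix (Fin N) (Fin N) ℝ := fun k' k =>
  if (k:ℕ) = 0 then 1 else (if k' = k then 1 else 0) - (if (k':ℕ) = 0 then 1 else 0)

noncomputable def CmxInv (N : ℕ) : Matrix (Fin N) (Fin N) ℝ := fun k k' =>
  if (k:ℕ) = 0 then (N:ℝ)⁻¹ else (if k' = k then 1 else 0) - (N:ℝ)⁻¹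

lemma val_zero_iff {N : ℕ} (hN : 1 ≤ N) (k : Fin N) : ((k:ℕ) = 0) ↔ (k = ⟨0, hN⟩) := by
  rw [Fin.ext_iff]

lemma sum_val_zero {N : ℕ} (hN : 1 ≤ N) (f : Fin N → ℝ) :
    ∑ k : Fin N, (if (k:ℕ) = 0 then f k else 0) = f ⟨0, hN⟩ := by
  simp only [fun k => propext (val_zero_iff hN k)]
  rw [Finset.sum_ite_eq' univ (⟨0, hN⟩ : Fin N) f]
  simp

lemma colsum (N : ℕ) (hN : 1 ≤ N) (k : Fin N) :
    ∑ k' : Fin N, Cmx N k' k = if (k:ℕ) = 0 then (N:ℝ) else 0 := by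
  unfold Cmx
  by_cases hk : (k:ℕ) = 0
  · simp [hk]
  · rw [if_neg hk]
    have : ∀ k' : Fin N, (if (k:ℕ) = 0 then (1:ℝ) else (if k' = k then 1 else 0) - (if (k':ℕ) = 0 then 1 else 0))
        = (if k' = k then 1 else 0) - (if (k':ℕ) = 0 then 1 else 0) := fun k' => if_neg hk
    simp only [this]
    rw [Finset.sum_sub_distrib, Finset.sum_ite_eq' univ k (fun _ => (1:ℝ)),
      sum_val_zero hN (fun _ => (1:ℝ))]
    simp


lemma CmxInv_mul_Cmx (N : ℕ) (hN : 1 ≤ N) : CmxInv N * Cmx N = 1 := by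
  have hN0 : (N:ℝ) ≠ 0 := by positivity
  ext k k''
  rw [Matrix.mul_apply]
  by_cases hk : (k:ℕ) = 0
  · have : ∀ k' : Fin N, CmxInv N k k' * Cmx N k' k'' = (N:ℝ)⁻¹ * Cmx N k' k'' := by
      intro k'; unfold CmxInv; rw [if_pos hk]
    simp only [this]
    rw [← Finset.mul_sum, colsum N hN]
    by_cases hk'' : (k'':ℕ) = 0
    · rw [if_pos hk'', inv_mul_cancel₀ hN0, show k = k'' from Fin.ext (by omega),
        Matrix.one_apply_eq]
    · rw [if_neg hk'', mul_zero, Matrix.one_apply_ne]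
      intro h; exact hk'' (by rw [← h]; exact hk.symm ▸ rfl)
  · have hexp : ∀ k' : Fin N, CmxInv N k k' * Cmx N k' k''
        = ((if k' = k then (1:ℝ) else 0) - (N:ℝ)⁻¹) * Cmx N k' k'' := by
      intro k'; unfold CmxInv; rw [if_neg hk]
    simp only [hexp, sub_mul, ite_mul, one_mul, zero_mul]
    rw [Finset.sum_sub_distrib, Finset.sum_ite_eq' univ k (fun k' => Cmx N k' k''), ← Finset.mul_sum,
      colsum N hN]
    simp only [Finset.mem_univ, if_true]
    by_cases hk'' : (k'':ℕ) = 0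
    · rw [if_pos hk'']
      unfold Cmx
      rw [if_pos hk'', inv_mul_cancel₀ hN0, Matrix.one_apply_ne (by intro h; exact hk (h ▸ hk''))]
      ring
    · rw [if_neg hk'', mul_zero, sub_zero]
      unfold Cmx
      rw [if_neg hk'', if_neg hk]
      by_cases h : k = k''
      · rw [if_pos h, h, Matrix.one_apply_eq]; ring
      · rw [if_neg h, Matrix.one_apply_ne h]; ring


end Stmt7

namespace Stmt7

abbrev I (m s : ℕ) := (Fin m × Fin 2) ⊕ Fin s

variable (m s : ℕ)

def emb : I m s ≃ Fin (2*m+s) where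
  toFun := Sum.elim (fun p => ⟨2*p.1+p.2, by have := p.1.isLt; have := p.2.isLt; omega⟩)
    (fun j => ⟨2*m+j, by have := j.isLt; omega⟩)
  invFun i := if h : (i:ℕ) < 2*m then Sum.inl (⟨(i:ℕ)/2, by omega⟩, ⟨(i:ℕ)%2, by omega⟩)
    else Sum.inr ⟨(i:ℕ)-2*m, by have := i.isLt; omega⟩
  left_inv := by
    rintro (⟨k,e⟩|j)
    · have hk := k.isLt; have he := e.isLt
      dsimp only [Sum.elim_inl]
      rw [dif_pos (by omega)]
      congr 1
      ext
      · simp; omega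
      · simp; omega
    · dsimp only [Sum.elim_inr]
      rw [dif_neg (by omega)]
      simp
  right_inv := by
    intro i
    have := i.isLt
    dsimp only
    by_cases h : (i:ℕ) < 2*m
    · rw [dif_pos h]; simp only [Sum.elim_inl]; ext; simp; omega
    · rw [dif_neg h]; simp only [Sum.elim_inr]; ext; simp; omega

lemma emb_inl (k : Fin m) (e : Fin 2) : ((emb m s (Sum.inl (k, e))) : ℕ) = 2*k+e := rfl
lemma emb_inr (j : Fin s) : ((emb m s (Sum.inr j)) : ℕ) = 2*m+j := rfl

lemma adj_ll (k k' : Fin m) (e e' : Fin 2) :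
    (dimJoin m s).Adj (emb m s (Sum.inl (k,e))) (emb m s (Sum.inl (k',e'))) ↔ (k = k' ∧ e ≠ e') := by
  have hk := k.isLt; have hk' := k'.isLt; have he := e.isLt; have he' := e'.isLt
  show (_ ≠ _ ∧ _) ↔ _
  simp only [Ne, Fin.ext_iff, emb_inl]
  omega

lemma adj_lr (k : Fin m) (e : Fin 2) (j : Fin s) :
    (dimJoin m s).Adj (emb m s (Sum.inl (k,e))) (emb m s (Sum.inr j)) := by
  have hk := k.isLt; have he := e.isLt; have hj := j.isLt
  refine ⟨?_, Or.inr (Or.inl ⟨by simp [emb_inl]; omega, by simp [emb_inr]⟩)⟩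
  rw [Ne, Fin.ext_iff]; simp only [emb_inl, emb_inr]; omega

lemma adj_rl (j : Fin s) (k : Fin m) (e : Fin 2) :
    (dimJoin m s).Adj (emb m s (Sum.inr j)) (emb m s (Sum.inl (k,e))) :=
  ((dimJoin m s).adj_symm (adj_lr m s k e j))

lemma adj_rr (j j' : Fin s) :
    ¬ (dimJoin m s).Adj (emb m s (Sum.inr j)) (emb m s (Sum.inr j')) := by
  rintro ⟨h1, h⟩
  have hj := j.isLt; have hj' := j'.isLt
  simp only [emb_inr] at h
  omega

end Stmt7

namespace Stmt7

variable (m s : ℕ)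

lemma deg_l (k : Fin m) (e : Fin 2) : (dimJoin m s).degree (emb m s (Sum.inl (k,e))) = s + 1 := by
  classical
  rw [← SimpleGraph.card_neighborFinset_eq_degree, SimpleGraph.neighborFinset_eq_filter,
    Finset.card_filter]
  rw [← Equiv.sum_comp (emb m s) (fun u => if (dimJoin m s).Adj (emb m s (Sum.inl (k,e))) u then 1 else 0)]
  rw [Fintype.sum_sum_type]
  have h1 : ∑ p : Fin m × Fin 2,
      (if (dimJoin m s).Adj (emb m s (Sum.inl (k,e))) (emb m s (Sum.inl p)) then 1 else 0) = 1 := by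
    rw [Fintype.sum_prod_type]
    have : ∀ k' e', ((dimJoin m s).Adj (emb m s (Sum.inl (k,e))) (emb m s (Sum.inl (k',e')))) ↔
        (k = k' ∧ e ≠ e') := fun k' e' => adj_ll m s k k' e e'
    simp only [this]
    simp only [ite_and]
    have h0 : ∀ x : Fin m, (∑ x1 : Fin 2, if k = x then (if e ≠ x1 then (1:ℕ) else 0) else 0)
        = if k = x then 1 else 0 := by
      intro x
      by_cases h : k = x
      · simp only [h, if_true]
        fin_cases e <;> simp [Fin.sum_univ_two]
      · simp [h]
    simp only [h0]
    rw [Finset.sum_ite_eq]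
    simp
  have h2 : ∑ j : Fin s,
      (if (dimJoin m s).Adj (emb m s (Sum.inl (k,e))) (emb m s (Sum.inr j)) then 1 else 0) = s := by
    have : ∀ j : Fin s, (dimJoin m s).Adj (emb m s (Sum.inl (k,e))) (emb m s (Sum.inr j)) :=
      fun j => adj_lr m s k e j
    simp [this]
  rw [h1, h2]; omega

lemma deg_r (j : Fin s) : (dimJoin m s).degree (emb m s (Sum.inr j)) = 2 * m := by
  classical
  rw [← SimpleGraph.card_neighborFinset_eq_degree, SimpleGraph.neighborFinset_eq_filter,
    Finset.card_filter]
  rw [← Equiv.sum_comp (emb m s) (fun u => if (dimJoin m s).Adj (emb m s (Sum.inr j)) u then 1 else 0)]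
  rw [Fintype.sum_sum_type]
  have h1 : ∑ p : Fin m × Fin 2,
      (if (dimJoin m s).Adj (emb m s (Sum.inr j)) (emb m s (Sum.inl p)) then 1 else 0) = 2 * m := by
    have : ∀ p : Fin m × Fin 2, (dimJoin m s).Adj (emb m s (Sum.inr j)) (emb m s (Sum.inl p)) :=
      fun p => adj_rl m s j p.1 p.2
    simp [this]; ring
  have h2 : ∑ j' : Fin s,
      (if (dimJoin m s).Adj (emb m s (Sum.inr j)) (emb m s (Sum.inr j')) then 1 else 0) = 0 := by
    have : ∀ j' : Fin s, ¬ (dimJoin m s).Adj (emb m s (Sum.inr j)) (emb m s (Sum.inr j')) :=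
      fun j' => adj_rr m s j j'
    simp [this]
  rw [h1, h2]; omega

def Qexp : Matrix (I m s) (I m s) ℝ := fun a b =>
  match a, b with
  | Sum.inl (k,e), Sum.inl (k',e') => if k = k' then (if e = e' then (s:ℝ)+1 else 1) else 0
  | Sum.inl _, Sum.inr _ => 1
  | Sum.inr _, Sum.inl _ => 1
  | Sum.inr j, Sum.inr j' => if j = j' then (2*(m:ℝ)) else 0

lemma Q_eq : ((dimJoin m s).degMatrix ℝ + (dimJoin m s).adjMatrix ℝ).submatrix (emb m s) (emb m s)
    = Qexp m s := by
  classical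
  ext a b
  have hemb : Function.Injective (emb m s) := (emb m s).injective
  rcases a with ⟨k,e⟩ | j <;> rcases b with ⟨k',e'⟩ | j' <;>
    simp only [Matrix.submatrix_apply, Matrix.add_apply, SimpleGraph.degMatrix,
      Matrix.diagonal_apply, SimpleGraph.adjMatrix_apply, Qexp]
  · have hAdj := adj_ll m s k k' e e'
    by_cases hk : k = k'
    · by_cases he : e = e'
      · subst hk; subst he; simp [deg_l]
      · have hne : emb m s (Sum.inl (k,e)) ≠ emb m s (Sum.inl (k',e')) := by
          intro h; exact he (by have := hemb h; simpa [hk] using this)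
        rw [if_neg hne, if_pos (hAdj.mpr ⟨hk, he⟩), if_pos hk, if_neg he]
        simp
    · have hne : emb m s (Sum.inl (k,e)) ≠ emb m s (Sum.inl (k',e')) := by
        intro h; exact hk (by have := hemb h; simp at this; exact this.1)
      rw [if_neg hne, if_neg (fun h => hk (hAdj.mp h).1), if_neg hk]
      simp
  · have hne : emb m s (Sum.inl (k,e)) ≠ emb m s (Sum.inr j') := by
      intro h; simpa using hemb h
    rw [if_neg hne, if_pos (adj_lr m s k e j')]; simp
  · have hne : emb m s (Sum.inr j) ≠ emb m s (Sum.inl (k',e')) := by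
      intro h; simpa using hemb h
    rw [if_neg hne, if_pos (adj_rl m s j k' e')]; simp
  · by_cases hj : j = j'
    · subst hj
      rw [if_pos rfl, if_neg ((dimJoin m s).irrefl), if_pos rfl, deg_r]
      push_cast; ring
    · have hne : emb m s (Sum.inr j) ≠ emb m s (Sum.inr j') := by
        intro h; exact hj (by simpa using hemb h)
      rw [if_neg hne, if_neg (adj_rr m s j j'), if_neg hj]
      simp

end Stmt7


namespace Stmt7

variable (m s : ℕ)

def Pmat : Matrix (I m s) (I m s) ℝ := fun a b =>
  match a, b with
  | Sum.inl (k',e'), Sum.inl (k,e) =>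
      if (e:ℕ) = 0 then Cmx m k' k else (if k' = k then (if (e':ℕ) = 0 then 1 else -1) else 0)
  | Sum.inl _, Sum.inr _ => 0
  | Sum.inr _, Sum.inl _ => 0
  | Sum.inr j', Sum.inr j => Cmx s j' j

noncomputable def Pinv : Matrix (I m s) (I m s) ℝ := fun a b =>
  match a, b with
  | Sum.inl (k,e), Sum.inl (k',e') =>
      if (e:ℕ) = 0 then (2:ℝ)⁻¹ * CmxInv m k k'
      else (if k = k' then (if (e':ℕ) = 0 then (2:ℝ)⁻¹ else -(2:ℝ)⁻¹) else 0)
  | Sum.inl _, Sum.inr _ => 0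
  | Sum.inr _, Sum.inl _ => 0
  | Sum.inr j, Sum.inr j' => CmxInv s j j'

noncomputable def Tmat : Matrix (I m s) (I m s) ℝ := fun a b =>
  match a, b with
  | Sum.inl (k,e), Sum.inl (k',e') =>
      if k = k' ∧ e = e' then (if (e:ℕ) = 0 then (s:ℝ)+2 else (s:ℝ)) else 0
  | Sum.inl (k,e), Sum.inr j => if (k:ℕ) = 0 ∧ (e:ℕ) = 0 ∧ (j:ℕ) = 0 then (s:ℝ) else 0
  | Sum.inr j, Sum.inl (k,e) => if (j:ℕ) = 0 ∧ (k:ℕ) = 0 ∧ (e:ℕ) = 0 then 2*(m:ℝ) else 0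
  | Sum.inr j, Sum.inr j' => if j = j' then 2*(m:ℝ) else 0


lemma fin2cases (e : Fin 2) : e = 0 ∨ e = 1 := by
  rcases (by omega : (e:ℕ) = 0 ∨ (e:ℕ) = 1) with h | h
  exacts [Or.inl (Fin.ext h), Or.inr (Fin.ext h)]



lemma Pinv_mul_Pmat (hm : 1 ≤ m) (hs : 1 ≤ s) : Pinv m s * Pmat m s = 1 := by
  have hC := CmxInv_mul_Cmx m hm
  have hCs := CmxInv_mul_Cmx s hs
  ext a b
  rw [Matrix.mul_apply, Fintype.sum_sum_type]
  rcases a with ⟨k,e⟩ | j <;> rcases b with ⟨k',e'⟩ | j'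
  · -- matched block
    have hz : ∑ j'' : Fin s, Pinv m s (Sum.inl (k,e)) (Sum.inr j'') * Pmat m s (Sum.inr j'') (Sum.inl (k',e')) = 0 := by
      simp [Pinv, Pmat]
    rw [hz, add_zero, Fintype.sum_prod_type]
    have he2 : e = 0 ∨ e = 1 := by
      rcases (by omega : (e:ℕ) = 0 ∨ (e:ℕ) = 1) with h | h
      exacts [Or.inl (Fin.ext h), Or.inr (Fin.ext h)]
    have he2' : e' = 0 ∨ e' = 1 := by
      rcases (by omega : (e':ℕ) = 0 ∨ (e':ℕ) = 1) with h | h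
      exacts [Or.inl (Fin.ext h), Or.inr (Fin.ext h)]
    rcases he2 with rfl | rfl <;> rcases he2' with rfl | rfl
    · -- e = 0, e' = 0
      have : ∀ k'' : Fin m, ∑ e'' : Fin 2,
          Pinv m s (Sum.inl (k,0)) (Sum.inl (k'',e'')) * Pmat m s (Sum.inl (k'',e'')) (Sum.inl (k',0))
          = CmxInv m k k'' * Cmx m k'' k' := by
        intro k''
        rw [Fin.sum_univ_two]
        show (2:ℝ)⁻¹ * CmxInv m k k'' * Cmx m k'' k' + (2:ℝ)⁻¹ * CmxInv m k k'' * Cmx m k'' k' = _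
        ring
      simp only [this]
      rw [← Matrix.mul_apply, hC]
      show (1 : Matrix (Fin m) (Fin m) ℝ) k k' = (1 : Matrix (I m s) (I m s) ℝ) _ _
      by_cases h : k = k'
      · subst h; rw [Matrix.one_apply_eq, Matrix.one_apply_eq]
      · rw [Matrix.one_apply_ne h, Matrix.one_apply_ne (by simp [h])]
    · -- e = 0, e' = 1
      have : ∀ k'' : Fin m, ∑ e'' : Fin 2,
          Pinv m s (Sum.inl (k,0)) (Sum.inl (k'',e'')) * Pmat m s (Sum.inl (k'',e'')) (Sum.inl (k',1))
          = 0 := by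
        intro k''
        rw [Fin.sum_univ_two]
        show (2:ℝ)⁻¹ * CmxInv m k k'' * (if k'' = k' then (1:ℝ) else 0)
          + (2:ℝ)⁻¹ * CmxInv m k k'' * (if k'' = k' then (-1:ℝ) else 0) = 0
        by_cases h : k'' = k' <;> simp [h] <;> ring
      simp only [this]
      rw [Finset.sum_const_zero, Matrix.one_apply_ne (by simp)]
    · -- e = 1, e' = 0
      have : ∀ k'' : Fin m, ∑ e'' : Fin 2,
          Pinv m s (Sum.inl (k,1)) (Sum.inl (k'',e'')) * Pmat m s (Sum.inl (k'',e'')) (Sum.inl (k',0))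
          = 0 := by
        intro k''
        rw [Fin.sum_univ_two]
        show (if k = k'' then (2:ℝ)⁻¹ else 0) * Cmx m k'' k'
          + (if k = k'' then -(2:ℝ)⁻¹ else 0) * Cmx m k'' k' = 0
        by_cases h : k = k'' <;> simp [h] <;> ring
      simp only [this]
      rw [Finset.sum_const_zero, Matrix.one_apply_ne (by simp)]
    · -- e = 1, e' = 1
      have : ∀ k'' : Fin m, ∑ e'' : Fin 2,
          Pinv m s (Sum.inl (k,1)) (Sum.inl (k'',e'')) * Pmat m s (Sum.inl (k'',e'')) (Sum.inl (k',1))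
          = if k = k'' then (if k'' = k' then (1:ℝ) else 0) else 0 := by
        intro k''
        rw [Fin.sum_univ_two]
        show (if k = k'' then (2:ℝ)⁻¹ else 0) * (if k'' = k' then (1:ℝ) else 0)
          + (if k = k'' then -(2:ℝ)⁻¹ else 0) * (if k'' = k' then (-1:ℝ) else 0) = _
        by_cases h : k = k''
        · subst h
          by_cases h' : k = k' <;> simp [h'] <;> ring
        · simp [h]
      simp only [this]
      rw [Finset.sum_ite_eq univ k (fun k'' => if k'' = k' then (1:ℝ) else 0)]
      simp only [Finset.mem_univ, if_true]
      by_cases h : k = k'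
      · subst h; rw [if_pos rfl, Matrix.one_apply_eq]
      · rw [if_neg h, Matrix.one_apply_ne (by simp [h])]
  · -- row inl, col inr : both sums vanish
    have h1 : ∑ p : Fin m × Fin 2, Pinv m s (Sum.inl (k,e)) (Sum.inl p) * Pmat m s (Sum.inl p) (Sum.inr j') = 0 := by
      simp [Pmat, mul_zero]
    have h2 : ∑ j'' : Fin s, Pinv m s (Sum.inl (k,e)) (Sum.inr j'') * Pmat m s (Sum.inr j'') (Sum.inr j') = 0 := by
      simp [Pinv]
    rw [h1, h2, add_zero, Matrix.one_apply_ne (by simp)]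
  · have h1 : ∑ p : Fin m × Fin 2, Pinv m s (Sum.inr j) (Sum.inl p) * Pmat m s (Sum.inl p) (Sum.inl (k',e')) = 0 := by
      simp [Pinv]
    have h2 : ∑ j'' : Fin s, Pinv m s (Sum.inr j) (Sum.inr j'') * Pmat m s (Sum.inr j'') (Sum.inl (k',e')) = 0 := by
      simp [Pmat, mul_zero]
    rw [h1, h2, add_zero, Matrix.one_apply_ne (by simp)]
  · have h1 : ∑ p : Fin m × Fin 2, Pinv m s (Sum.inr j) (Sum.inl p) * Pmat m s (Sum.inl p) (Sum.inr j') = 0 := by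
      simp [Pinv]
    rw [h1, zero_add]
    have : ∀ j'' : Fin s, Pinv m s (Sum.inr j) (Sum.inr j'') * Pmat m s (Sum.inr j'') (Sum.inr j')
        = CmxInv s j j'' * Cmx s j'' j' := fun _ => rfl
    simp only [this]
    rw [← Matrix.mul_apply, hCs]
    by_cases h : j = j'
    · subst h; rw [Matrix.one_apply_eq, Matrix.one_apply_eq]
    · rw [Matrix.one_apply_ne h, Matrix.one_apply_ne (by simp [h])]


lemma QP_eq_PT (hm : 1 ≤ m) (hs : 1 ≤ s) : Qexp m s * Pmat m s = Pmat m s * Tmat m s := by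
  ext a c
  rw [Matrix.mul_apply, Matrix.mul_apply, Fintype.sum_sum_type, Fintype.sum_sum_type,
    Fintype.sum_prod_type, Fintype.sum_prod_type]
  rcases a with ⟨k0,e0⟩ | j0 <;> rcases c with ⟨k,e⟩ | j
  · -- Case A : row inl (k0,e0), col inl (k,e)
    have hz1 : ∑ j'' : Fin s, Qexp m s (Sum.inl (k0,e0)) (Sum.inr j'') * Pmat m s (Sum.inr j'') (Sum.inl (k,e)) = 0 := by
      simp [Pmat, Qexp]
    have hz2 : ∑ j'' : Fin s, Pmat m s (Sum.inl (k0,e0)) (Sum.inr j'') * Tmat m s (Sum.inr j'') (Sum.inl (k,e)) = 0 := by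
      simp [Pmat]
    rw [hz1, hz2, add_zero, add_zero]
    rcases fin2cases e with rfl | rfl
    · -- e = 0
      have hL : ∀ k'' : Fin m, ∑ e'' : Fin 2,
          Qexp m s (Sum.inl (k0,e0)) (Sum.inl (k'',e'')) * Pmat m s (Sum.inl (k'',e'')) (Sum.inl (k,0))
          = if k0 = k'' then ((s:ℝ)+2) * Cmx m k'' k else 0 := by
        intro k''
        rw [Fin.sum_univ_two]
        simp only [Qexp, Pmat]
        by_cases h : k0 = k''
        · rcases fin2cases e0 with rfl | rfl <;> simp [h] <;> ring
        · simp [h]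
      have hR : ∀ k'' : Fin m, ∑ e'' : Fin 2,
          Pmat m s (Sum.inl (k0,e0)) (Sum.inl (k'',e'')) * Tmat m s (Sum.inl (k'',e'')) (Sum.inl (k,0))
          = if k'' = k then Cmx m k0 k'' * ((s:ℝ)+2) else 0 := by
        intro k''
        rw [Fin.sum_univ_two]
        simp only [Pmat, Tmat]
        by_cases h : k'' = k <;> simp [h]
      rw [Finset.sum_congr rfl (fun k'' _ => hL k''), Finset.sum_congr rfl (fun k'' _ => hR k''),
        Finset.sum_ite_eq, Finset.sum_ite_eq']
      simp only [Finset.mem_univ, if_true]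
      ring
    · -- e = 1
      rcases fin2cases e0 with rfl | rfl
      · have hL : ∀ k'' : Fin m, ∑ e'' : Fin 2,
            Qexp m s (Sum.inl (k0,0)) (Sum.inl (k'',e'')) * Pmat m s (Sum.inl (k'',e'')) (Sum.inl (k,1))
            = if k0 = k'' then (if k'' = k then (s:ℝ) else 0) else 0 := by
          intro k''
          rw [Fin.sum_univ_two]
          simp only [Qexp, Pmat]
          by_cases h' : k'' = k
          · subst h'
            by_cases h : k0 = k'' <;> simp [h] <;> ring
          · simp [h']
        have hR : ∀ k'' : Fin m, ∑ e'' : Fin 2,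
            Pmat m s (Sum.inl (k0,0)) (Sum.inl (k'',e'')) * Tmat m s (Sum.inl (k'',e'')) (Sum.inl (k,1))
            = if k'' = k then (if k0 = k'' then (s:ℝ) else 0) else 0 := by
          intro k''
          rw [Fin.sum_univ_two]
          simp only [Pmat, Tmat]
          by_cases h : k'' = k
          · subst h
            by_cases h' : k0 = k'' <;> simp [h'] <;> ring
          · simp [h]
        rw [Finset.sum_congr rfl (fun k'' _ => hL k''), Finset.sum_congr rfl (fun k'' _ => hR k''),
          Finset.sum_ite_eq, Finset.sum_ite_eq']
        simp only [Finset.mem_univ, if_true]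
      · have hL : ∀ k'' : Fin m, ∑ e'' : Fin 2,
            Qexp m s (Sum.inl (k0,1)) (Sum.inl (k'',e'')) * Pmat m s (Sum.inl (k'',e'')) (Sum.inl (k,1))
            = if k0 = k'' then (if k'' = k then -(s:ℝ) else 0) else 0 := by
          intro k''
          rw [Fin.sum_univ_two]
          simp only [Qexp, Pmat]
          by_cases h' : k'' = k
          · subst h'
            by_cases h : k0 = k'' <;> simp [h] <;> ring
          · simp [h']
        have hR : ∀ k'' : Fin m, ∑ e'' : Fin 2,
            Pmat m s (Sum.inl (k0,1)) (Sum.inl (k'',e'')) * Tmat m s (Sum.inl (k'',e'')) (Sum.inl (k,1))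
            = if k'' = k then (if k0 = k'' then -(s:ℝ) else 0) else 0 := by
          intro k''
          rw [Fin.sum_univ_two]
          simp only [Pmat, Tmat]
          by_cases h : k'' = k
          · subst h
            by_cases h' : k0 = k'' <;> simp [h'] <;> ring
          · simp [h]
        rw [Finset.sum_congr rfl (fun k'' _ => hL k''), Finset.sum_congr rfl (fun k'' _ => hR k''),
          Finset.sum_ite_eq, Finset.sum_ite_eq']
        simp only [Finset.mem_univ, if_true]
  · -- Case B : row inl (k0,e0), col inr j
    have hz1 : ∑ p : Fin m, ∑ e'' : Fin 2,
        Qexp m s (Sum.inl (k0,e0)) (Sum.inl (p,e'')) * Pmat m s (Sum.inl (p,e'')) (Sum.inr j) = 0 := by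
      simp [Pmat, mul_zero]
    have hz2 : ∑ j'' : Fin s, Pmat m s (Sum.inl (k0,e0)) (Sum.inr j'') * Tmat m s (Sum.inr j'') (Sum.inr j) = 0 := by
      simp [Pmat]
    rw [hz1, hz2, add_zero, zero_add]
    have hLs : ∑ j'' : Fin s, Qexp m s (Sum.inl (k0,e0)) (Sum.inr j'') * Pmat m s (Sum.inr j'') (Sum.inr j)
        = if (j:ℕ) = 0 then (s:ℝ) else 0 := by
      have : ∀ j'' : Fin s, Qexp m s (Sum.inl (k0,e0)) (Sum.inr j'') * Pmat m s (Sum.inr j'') (Sum.inr j)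
          = Cmx s j'' j := by intro j''; simp only [Qexp, Pmat]; rw [one_mul]
      rw [Finset.sum_congr rfl (fun j'' _ => this j''), colsum s hs]
    rw [hLs]
    have hR : ∀ k'' : Fin m, ∑ e'' : Fin 2,
        Pmat m s (Sum.inl (k0,e0)) (Sum.inl (k'',e'')) * Tmat m s (Sum.inl (k'',e'')) (Sum.inr j)
        = if (k'':ℕ) = 0 then (if (j:ℕ) = 0 then Cmx m k0 k'' * (s:ℝ) else 0) else 0 := by
      intro k''
      rw [Fin.sum_univ_two]
      simp only [Pmat, Tmat]
      by_cases h : (k'':ℕ) = 0 <;> by_cases h' : (j:ℕ) = 0 <;> simp [h, h']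
    rw [Finset.sum_congr rfl (fun k'' _ => hR k''), sum_val_zero hm]
    by_cases h' : (j:ℕ) = 0
    · rw [if_pos h', if_pos h']
      have : Cmx m k0 ⟨0, hm⟩ = 1 := if_pos rfl
      rw [this, one_mul]
    · rw [if_neg h', if_neg h']
  · -- Case C : row inr j0, col inl (k,e)
    have hz1 : ∑ j'' : Fin s, Qexp m s (Sum.inr j0) (Sum.inr j'') * Pmat m s (Sum.inr j'') (Sum.inl (k,e)) = 0 := by
      simp [Pmat, mul_zero]
    have hz2 : ∑ p : Fin m, ∑ e'' : Fin 2,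
        Pmat m s (Sum.inr j0) (Sum.inl (p,e'')) * Tmat m s (Sum.inl (p,e'')) (Sum.inl (k,e)) = 0 := by
      simp [Pmat]
    rw [hz1, hz2, add_zero, zero_add]
    rcases fin2cases e with rfl | rfl
    · have hL : ∀ k'' : Fin m, ∑ e'' : Fin 2,
          Qexp m s (Sum.inr j0) (Sum.inl (k'',e'')) * Pmat m s (Sum.inl (k'',e'')) (Sum.inl (k,0))
          = 2 * Cmx m k'' k := by
        intro k''
        rw [Fin.sum_univ_two]
        simp only [Qexp, Pmat]
        simp
        ring
      rw [Finset.sum_congr rfl (fun k'' _ => hL k''), ← Finset.mul_sum, colsum m hm]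
      have hRs : ∀ j'' : Fin s, Pmat m s (Sum.inr j0) (Sum.inr j'') * Tmat m s (Sum.inr j'') (Sum.inl (k,0))
          = if (j'':ℕ) = 0 then (if (k:ℕ) = 0 then Cmx s j0 j'' * (2*(m:ℝ)) else 0) else 0 := by
        intro j''
        simp only [Pmat, Tmat]
        by_cases h : (j'':ℕ) = 0 <;> by_cases h' : (k:ℕ) = 0 <;> simp [h, h']
      rw [Finset.sum_congr rfl (fun j'' _ => hRs j''), sum_val_zero hs]
      by_cases h' : (k:ℕ) = 0
      · rw [if_pos h', if_pos h']
        have : Cmx s j0 ⟨0, hs⟩ = 1 := if_pos rfl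
        rw [this, one_mul]
      · rw [if_neg h', if_neg h', mul_zero]
    · have hL : ∀ k'' : Fin m, ∑ e'' : Fin 2,
          Qexp m s (Sum.inr j0) (Sum.inl (k'',e'')) * Pmat m s (Sum.inl (k'',e'')) (Sum.inl (k,1))
          = 0 := by
        intro k''
        rw [Fin.sum_univ_two]
        simp only [Qexp, Pmat]
        by_cases h : k'' = k <;> simp [h]
      rw [Finset.sum_congr rfl (fun k'' _ => hL k''), Finset.sum_const_zero]
      have hRs : ∀ j'' : Fin s, Pmat m s (Sum.inr j0) (Sum.inr j'') * Tmat m s (Sum.inr j'') (Sum.inl (k,1))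
          = 0 := by
        intro j''
        simp only [Pmat, Tmat]
        simp
      rw [Finset.sum_congr rfl (fun j'' _ => hRs j''), Finset.sum_const_zero]
  · -- Case D : row inr j0, col inr j
    have hz1 : ∑ p : Fin m, ∑ e'' : Fin 2,
        Qexp m s (Sum.inr j0) (Sum.inl (p,e'')) * Pmat m s (Sum.inl (p,e'')) (Sum.inr j) = 0 := by
      simp [Pmat, mul_zero]
    have hz2 : ∑ p : Fin m, ∑ e'' : Fin 2,
        Pmat m s (Sum.inr j0) (Sum.inl (p,e'')) * Tmat m s (Sum.inl (p,e'')) (Sum.inr j) = 0 := by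
      simp [Pmat]
    rw [hz1, hz2, zero_add, zero_add]
    have hL : ∀ j'' : Fin s, Qexp m s (Sum.inr j0) (Sum.inr j'') * Pmat m s (Sum.inr j'') (Sum.inr j)
        = if j0 = j'' then 2*(m:ℝ) * Cmx s j'' j else 0 := by
      intro j''
      simp only [Qexp, Pmat]
      by_cases h : j0 = j'' <;> simp [h]
    have hR : ∀ j'' : Fin s, Pmat m s (Sum.inr j0) (Sum.inr j'') * Tmat m s (Sum.inr j'') (Sum.inr j)
        = if j'' = j then Cmx s j0 j'' * (2*(m:ℝ)) else 0 := by
      intro j''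
      simp only [Pmat, Tmat]
      by_cases h : j'' = j <;> simp [h]
    rw [Finset.sum_congr rfl (fun j'' _ => hL j''), Finset.sum_congr rfl (fun j'' _ => hR j''),
      Finset.sum_ite_eq, Finset.sum_ite_eq']
    simp only [Finset.mem_univ, if_true]
    ring


def bfun : I m s → ℕ :=
  Sum.elim (fun p => if (p.1:ℕ) = 0 ∧ (p.2:ℕ) = 0 then 0 else 1) (fun j => if (j:ℕ) = 0 then 0 else 1)


lemma bT : (Tmat m s).BlockTriangular (bfun m s) := by
  rintro (⟨k,e⟩|j) (⟨k',e'⟩|j') h <;> simp only [bfun, Sum.elim_inl, Sum.elim_inr] at h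
  · -- inl inl
    have h1 : ¬((k:ℕ) = 0 ∧ (e:ℕ) = 0) := by intro hc; rw [if_pos hc] at h; omega
    have h2 : (k':ℕ) = 0 ∧ (e':ℕ) = 0 := by
      by_contra hc; rw [if_neg hc] at h; rw [if_neg h1] at h; omega
    show (if k = k' ∧ e = e' then (if (e:ℕ) = 0 then (s:ℝ)+2 else (s:ℝ)) else 0) = 0
    rw [if_neg]
    rintro ⟨rfl, rfl⟩
    exact h1 h2
  · have h1 : ¬((k:ℕ) = 0 ∧ (e:ℕ) = 0) := by intro hc; rw [if_pos hc] at h; omega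
    show (if (k:ℕ) = 0 ∧ (e:ℕ) = 0 ∧ (j':ℕ) = 0 then (s:ℝ) else 0) = 0
    rw [if_neg]; rintro ⟨h2, h3, _⟩; exact h1 ⟨h2, h3⟩
  · have h1 : ¬((j:ℕ) = 0) := by intro hc; rw [if_pos hc] at h; omega
    show (if (j:ℕ) = 0 ∧ (k':ℕ) = 0 ∧ (e':ℕ) = 0 then 2*(m:ℝ) else 0) = 0
    rw [if_neg]; rintro ⟨h2, _⟩; exact h1 h2
  · have h1 : ¬((j:ℕ) = 0) := by intro hc; rw [if_pos hc] at h; omega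
    have h2 : (j':ℕ) = 0 := by by_contra hc; rw [if_neg hc, if_neg h1] at h; omega
    show (if j = j' then 2*(m:ℝ) else 0) = 0
    rw [if_neg]; rintro rfl; exact h1 h2

lemma image_bfun (hm : 1 ≤ m) (hs : 1 ≤ s) :
    Finset.image (bfun m s) Finset.univ = ({0, 1} : Finset ℕ) := by
  ext x
  simp only [Finset.mem_image, Finset.mem_univ, true_and, Finset.mem_insert, Finset.mem_singleton]
  constructor
  · rintro ⟨a, rfl⟩
    rcases a with ⟨k,e⟩ | j <;> simp only [bfun, Sum.elim_inl, Sum.elim_inr] <;> split <;> omega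
  · rintro (rfl | rfl)
    · exact ⟨Sum.inl (⟨0, hm⟩, 0), by simp [bfun]⟩
    · exact ⟨Sum.inl (⟨0, hm⟩, 1), by simp [bfun]⟩

/-- equivalence for block 0 -/
noncomputable def eqv0 (hm : 1 ≤ m) (hs : 1 ≤ s) :
    Fin 2 ≃ {a : I m s // bfun m s a = 0} where
  toFun i := if i = 0 then ⟨Sum.inl (⟨0, hm⟩, 0), by simp [bfun]⟩ else ⟨Sum.inr ⟨0, hs⟩, by simp [bfun]⟩
  invFun a := Sum.elim (fun _ => 0) (fun _ => 1) a.1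
  left_inv := by
    intro i
    rcases (by omega : (i:ℕ) = 0 ∨ (i:ℕ) = 1) with h | h
    · have : i = 0 := Fin.ext h
      subst this; simp
    · have : i = 1 := Fin.ext h
      subst this; simp
  right_inv := by
    rintro ⟨(⟨k,e⟩|j), ha⟩ <;> simp only [bfun, Sum.elim_inl, Sum.elim_inr] at ha
    · have h2 : (k:ℕ) = 0 ∧ (e:ℕ) = 0 := by by_contra hc; rw [if_neg hc] at ha; omega
      have hk : k = ⟨0, hm⟩ := Fin.ext h2.1
      have he : e = 0 := Fin.ext h2.2
      subst hk; subst he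
      simp
    · have h2 : (j:ℕ) = 0 := by by_contra hc; rw [if_neg hc] at ha; omega
      have hj : j = ⟨0, hs⟩ := Fin.ext h2
      subst hj
      simp

noncomputable def M2 : Matrix (Fin 2) (Fin 2) ℝ := !![(s:ℝ)+2, (s:ℝ); 2*(m:ℝ), 2*(m:ℝ)]

lemma eqv0_symm_apply (hm : 1 ≤ m) (hs : 1 ≤ s) (a : {a : I m s // bfun m s a = 0}) :
    (eqv0 m s hm hs).symm a = Sum.elim (fun _ => (0 : Fin 2)) (fun _ => 1) a.1 := rfl

lemma block0_eq (hm : 1 ≤ m) (hs : 1 ≤ s) :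
    (Tmat m s).toSquareBlock (bfun m s) 0
      = ((M2 m s).submatrix (eqv0 m s hm hs).symm (eqv0 m s hm hs).symm) := by
  ext ⟨a, ha⟩ ⟨c, hc⟩
  simp only [Matrix.toSquareBlock_def, Matrix.submatrix_apply, eqv0_symm_apply]
  have ha' := ha; have hc' := hc
  rcases a with ⟨k,e⟩ | j <;> rcases c with ⟨k',e'⟩ | j' <;>
      simp only [bfun, Sum.elim_inl, Sum.elim_inr] at ha' hc'
  · have h2 : (k:ℕ) = 0 ∧ (e:ℕ) = 0 := by by_contra hcc; rw [if_neg hcc] at ha'; omega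
    have h2' : (k':ℕ) = 0 ∧ (e':ℕ) = 0 := by by_contra hcc; rw [if_neg hcc] at hc'; omega
    have : k = k' := Fin.ext (by omega)
    have he : e = e' := Fin.ext (by omega)
    subst this; subst he
    simp [Tmat, M2, h2.2, (Fin.ext h2.2 : e = 0)]
  · have h2 : (k:ℕ) = 0 ∧ (e:ℕ) = 0 := by by_contra hcc; rw [if_neg hcc] at ha'; omega
    have h2' : (j':ℕ) = 0 := by by_contra hcc; rw [if_neg hcc] at hc'; omega
    simp [Tmat, M2, h2.1, h2.2, h2', (Fin.ext h2.2 : e = 0)]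
  · have h2 : (j:ℕ) = 0 := by by_contra hcc; rw [if_neg hcc] at ha'; omega
    have h2' : (k':ℕ) = 0 ∧ (e':ℕ) = 0 := by by_contra hcc; rw [if_neg hcc] at hc'; omega
    simp [Tmat, M2, h2, h2'.1, h2'.2, (Fin.ext h2'.2 : e' = 0)]
  · have h2 : (j:ℕ) = 0 := by by_contra hcc; rw [if_neg hcc] at ha'; omega
    have h2' : (j':ℕ) = 0 := by by_contra hcc; rw [if_neg hcc] at hc'; omega
    have : j = j' := Fin.ext (by omega)
    subst this
    simp [Tmat, M2]

lemma block1_eq :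
    (Tmat m s).toSquareBlock (bfun m s) 1
      = Matrix.diagonal (fun a : {a : I m s // bfun m s a = 1} =>
          Sum.elim (fun p : Fin m × Fin 2 => if (p.2:ℕ) = 0 then (s:ℝ)+2 else (s:ℝ))
            (fun _ : Fin s => 2*(m:ℝ)) a.1) := by
  ext ⟨a, ha⟩ ⟨c, hc⟩
  by_cases hac : a = c
  · subst hac
    have : (⟨a, ha⟩ : {a : I m s // bfun m s a = 1}) = ⟨a, hc⟩ := rfl
    rw [Matrix.diagonal_apply_eq]
    rcases a with ⟨k,e⟩ | j
    · show Tmat m s (Sum.inl (k,e)) (Sum.inl (k,e)) = _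
      simp [Tmat]
    · show Tmat m s (Sum.inr j) (Sum.inr j) = _
      simp [Tmat]
  · rw [Matrix.diagonal_apply_ne _ (by simpa using hac)]
    rcases a with ⟨k,e⟩ | j <;> rcases c with ⟨k',e'⟩ | j' <;>
        simp only [bfun, Sum.elim_inl, Sum.elim_inr] at ha hc
    · show Tmat m s (Sum.inl (k,e)) (Sum.inl (k',e')) = 0
      have : ¬(k = k' ∧ e = e') := by rintro ⟨rfl, rfl⟩; exact hac rfl
      simp [Tmat, this]
    · show Tmat m s (Sum.inl (k,e)) (Sum.inr j') = 0
      have h1 : ¬((k:ℕ) = 0 ∧ (e:ℕ) = 0) := by intro hcc; rw [if_pos hcc] at ha; omega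
      have : ¬((k:ℕ) = 0 ∧ (e:ℕ) = 0 ∧ (j':ℕ) = 0) := by rintro ⟨x1,x2,_⟩; exact h1 ⟨x1,x2⟩
      exact if_neg this
    · show Tmat m s (Sum.inr j) (Sum.inl (k',e')) = 0
      have h1 : ¬((j:ℕ) = 0) := by intro hcc; rw [if_pos hcc] at ha; omega
      have : ¬((j:ℕ) = 0 ∧ (k':ℕ) = 0 ∧ (e':ℕ) = 0) := by rintro ⟨x1,_⟩; exact h1 x1
      exact if_neg this
    · show Tmat m s (Sum.inr j) (Sum.inr j') = 0
      have : ¬ j = j' := by rintro rfl; exact hac rfl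
      simp [Tmat, this]


noncomputable def r1 : ℝ :=
  (2 + ((2 * m + s : ℕ) : ℝ) + Real.sqrt ((2 + ((2 * m + s : ℕ) : ℝ))^2 - 16 * m)) / 2
noncomputable def r2 : ℝ :=
  (2 + ((2 * m + s : ℕ) : ℝ) - Real.sqrt ((2 + ((2 * m + s : ℕ) : ℝ))^2 - 16 * m)) / 2

lemma M2_charpoly : (M2 m s).charpoly = (X - C (r1 m s)) * (X - C (r2 m s)) := by
  have hd : (0:ℝ) ≤ (2 + ((2 * m + s : ℕ) : ℝ))^2 - 16 * m := by
    push_cast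
    nlinarith [sq_nonneg ((m:ℝ) - 1), sq_nonneg (s:ℝ), mul_nonneg (Nat.cast_nonneg (α := ℝ) m) (Nat.cast_nonneg (α := ℝ) s), Nat.cast_nonneg (α := ℝ) s]
  have hs2 : Real.sqrt ((2 + ((2 * m + s : ℕ) : ℝ))^2 - 16 * m) ^ 2
      = (2 + ((2 * m + s : ℕ) : ℝ))^2 - 16 * m := Real.sq_sqrt hd
  have hsum : r1 m s + r2 m s = ((s:ℝ)+2) + 2*(m:ℝ) := by
    unfold r1 r2; push_cast; ring
  have hprod : r1 m s * r2 m s = ((s:ℝ)+2)*(2*(m:ℝ)) - (s:ℝ)*(2*(m:ℝ)) := by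
    have h : r1 m s * r2 m s = ((2 + ((2 * m + s : ℕ) : ℝ))^2
        - Real.sqrt ((2 + ((2 * m + s : ℕ) : ℝ))^2 - 16 * m) ^ 2) / 4 := by
      unfold r1 r2; ring
    rw [h, hs2]; push_cast; ring
  rw [Matrix.charpoly, Matrix.det_fin_two]
  have h00 : charmatrix (M2 m s) 0 0 = X - C ((s:ℝ)+2) := by
    rw [charmatrix_apply_eq]; simp [M2]
  have h11 : charmatrix (M2 m s) 1 1 = X - C (2*(m:ℝ)) := by
    rw [charmatrix_apply_eq]; simp [M2]
  have h01 : charmatrix (M2 m s) 0 1 = - C ((s:ℝ)) := by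
    rw [charmatrix_apply_ne _ _ _ (by decide)]; simp [M2]
  have h10 : charmatrix (M2 m s) 1 0 = - C (2*(m:ℝ)) := by
    rw [charmatrix_apply_ne _ _ _ (by decide)]; simp [M2]
  rw [h00, h11, h01, h10]
  calc (X - C ((s:ℝ)+2)) * (X - C (2*(m:ℝ))) - (- C ((s:ℝ))) * (- C (2*(m:ℝ)))
      = X^2 - (C ((s:ℝ)+2) + C (2*(m:ℝ)))*X + (C ((s:ℝ)+2) * C (2*(m:ℝ)) - C ((s:ℝ)) * C (2*(m:ℝ))) := by
        ring
    _ = X^2 - C (r1 m s + r2 m s) * X + C (r1 m s * r2 m s) := by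
        rw [← _root_.map_add, ← _root_.map_mul, ← _root_.map_mul, ← _root_.map_sub, hsum, hprod]
    _ = (X - C (r1 m s)) * (X - C (r2 m s)) := by
        rw [_root_.map_add, _root_.map_mul]; ring

lemma prod_ite_zero (N : ℕ) (hN : 1 ≤ N) (q : ℝ[X]) :
    ∏ k : Fin N, (if (k:ℕ) = 0 then 1 else q) = q^(N-1) := by
  rw [← Finset.mul_prod_erase univ _ (Finset.mem_univ (⟨0,hN⟩ : Fin N)), if_pos rfl, one_mul]
  rw [Finset.prod_congr rfl (fun k hk => if_neg (by
    intro h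
    exact (Finset.mem_erase.mp hk).1 (Fin.ext h)))]
  rw [Finset.prod_const, Finset.card_erase_of_mem (Finset.mem_univ _), Finset.card_univ,
    Fintype.card_fin]


lemma block1_charpoly (hm : 1 ≤ m) (hs : 1 ≤ s) :
    ((Tmat m s).toSquareBlock (bfun m s) 1).charpoly
      = (X - C ((s:ℝ)+2))^(m-1) * (X - C ((s:ℝ)))^m * (X - C (2*(m:ℝ)))^(s-1) := by
  rw [block1_eq, _root_.charpoly_diagonal]
  rw [← Finset.prod_subtype (Finset.univ.filter (fun a => bfun m s a = 1))
    (fun a => by simp) (fun a : I m s => X - C (Sum.elim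
      (fun p : Fin m × Fin 2 => if (p.2:ℕ) = 0 then (s:ℝ)+2 else (s:ℝ))
      (fun _ : Fin s => 2*(m:ℝ)) a))]
  rw [Finset.prod_filter, Fintype.prod_sum_type, Fintype.prod_prod_type]
  have hsplit : ∀ k : Fin m, ∏ e : Fin 2,
      (if bfun m s (Sum.inl (k, e)) = 1 then
        (X : ℝ[X]) - C (Sum.elim (fun p : Fin m × Fin 2 => if (p.2:ℕ) = 0 then (s:ℝ)+2 else (s:ℝ))
          (fun _ : Fin s => 2*(m:ℝ)) (Sum.inl (k, e))) else 1)
      = (if (k:ℕ) = 0 then 1 else ((X : ℝ[X]) - C ((s:ℝ)+2))) * ((X : ℝ[X]) - C ((s:ℝ))) := by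
    intro k
    rw [Fin.prod_univ_two]
    simp only [Sum.elim_inl, bfun]
    by_cases hk : (k:ℕ) = 0
    · simp [hk]
    · simp [hk]
  rw [Finset.prod_congr rfl (fun k _ => hsplit k), Finset.prod_mul_distrib,
    prod_ite_zero m hm, Finset.prod_const, Finset.card_univ, Fintype.card_fin]
  have hr : ∀ j : Fin s,
      (if bfun m s (Sum.inr j) = 1 then
        (X : ℝ[X]) - C (Sum.elim (fun p : Fin m × Fin 2 => if (p.2:ℕ) = 0 then (s:ℝ)+2 else (s:ℝ))
          (fun _ : Fin s => 2*(m:ℝ)) (Sum.inr j)) else 1)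
      = (if (j:ℕ) = 0 then 1 else ((X : ℝ[X]) - C (2*(m:ℝ)))) := by
    intro j
    simp only [Sum.elim_inr, bfun]
    by_cases hj : (j:ℕ) = 0 <;> simp [hj]
  rw [Finset.prod_congr rfl (fun j _ => hr j), prod_ite_zero s hs]

lemma Tmat_charpoly (hm : 1 ≤ m) (hs : 1 ≤ s) :
    (Tmat m s).charpoly = (M2 m s).charpoly *
      ((X - C ((s:ℝ)+2))^(m-1) * (X - C ((s:ℝ)))^m * (X - C (2*(m:ℝ)))^(s-1)) := by
  rw [(bT m s).charpoly, image_bfun m s hm hs]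
  rw [show ({0, 1} : Finset ℕ) = insert 0 {1} from rfl,
    Finset.prod_insert (by simp), Finset.prod_singleton]
  rw [block1_charpoly m s hm hs]
  congr 1
  rw [block0_eq m s hm hs, ← Matrix.reindex_apply, Matrix.charpoly_reindex]


end Stmt7

/-- Signless Laplacian spectrum of `H = mK₂ ∨ \bar{K}_s` (`n = 2m+s`):
`{(2+n±√((2+n)²−16m))/2, (n−2m+2)^{[m−1]}, (n−2m)^{[m]}, (2m)^{[n−2m−1]}}`. -/
theorem stmt_7 (m s : ℕ) (hm : 1 ≤ m) (hs : 1 ≤ s) :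
    ((dimJoin m s).degMatrix ℝ + (dimJoin m s).adjMatrix ℝ).charpoly.roots =
      {(2 + ((2 * m + s : ℕ) : ℝ) +
          Real.sqrt ((2 + ((2 * m + s : ℕ) : ℝ))^2 - 16 * m)) / 2,
       (2 + ((2 * m + s : ℕ) : ℝ) -
          Real.sqrt ((2 + ((2 * m + s : ℕ) : ℝ))^2 - 16 * m)) / 2} +
      Multiset.replicate (m - 1) (((2 * m + s : ℕ) : ℝ) - 2 * m + 2) +
      Multiset.replicate m (((2 * m + s : ℕ) : ℝ) - 2 * m) +
      Multiset.replicate (s - 1) ((2 * m : ℕ) : ℝ) := by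
  classical
  have hQ : ((dimJoin m s).degMatrix ℝ + (dimJoin m s).adjMatrix ℝ).charpoly
      = (Stmt7.Qexp m s).charpoly := by
    have hre : Matrix.reindex (Stmt7.emb m s) (Stmt7.emb m s) (Stmt7.Qexp m s)
        = (dimJoin m s).degMatrix ℝ + (dimJoin m s).adjMatrix ℝ := by
      rw [← Stmt7.Q_eq m s]
      ext i j
      simp [Matrix.reindex_apply, Matrix.submatrix_apply]
    rw [← hre, Matrix.charpoly_reindex]
  have hQT : (Stmt7.Qexp m s).charpoly = (Stmt7.Tmat m s).charpoly :=
    charpoly_similar (Stmt7.Qexp m s) (Stmt7.Pmat m s) (Stmt7.Pinv m s) (Stmt7.Tmat m s)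
      (Stmt7.Pinv_mul_Pmat m s hm hs) (Stmt7.QP_eq_PT m s hm hs)
  rw [hQ, hQT, Stmt7.Tmat_charpoly m s hm hs, Stmt7.M2_charpoly m s]
  have v1 : ((2 * m + s : ℕ) : ℝ) - 2 * m + 2 = (s:ℝ) + 2 := by push_cast; ring
  have v2 : ((2 * m + s : ℕ) : ℝ) - 2 * m = (s:ℝ) := by push_cast; ring
  have v3 : ((2 * m : ℕ) : ℝ) = 2 * (m:ℝ) := by push_cast; ring
  rw [v1, v2, v3]
  have h1 : ((X : ℝ[X]) - C (Stmt7.r1 m s)) ≠ 0 := X_sub_C_ne_zero _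
  have h2 : ((X : ℝ[X]) - C (Stmt7.r2 m s)) ≠ 0 := X_sub_C_ne_zero _
  have h3 : ((X : ℝ[X]) - C ((s:ℝ)+2))^(m-1) ≠ 0 := pow_ne_zero _ (X_sub_C_ne_zero _)
  have h4 : ((X : ℝ[X]) - C ((s:ℝ)))^m ≠ 0 := pow_ne_zero _ (X_sub_C_ne_zero _)
  have h5 : ((X : ℝ[X]) - C (2*(m:ℝ)))^(s-1) ≠ 0 := pow_ne_zero _ (X_sub_C_ne_zero _)
  rw [Polynomial.roots_mul (mul_ne_zero (mul_ne_zero h1 h2) (mul_ne_zero (mul_ne_zero h3 h4) h5)),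
    Polynomial.roots_mul (mul_ne_zero h1 h2),
    Polynomial.roots_mul (mul_ne_zero (mul_ne_zero h3 h4) h5),
    Polynomial.roots_mul (mul_ne_zero h3 h4),
    Polynomial.roots_pow, Polynomial.roots_pow, Polynomial.roots_pow,
    Polynomial.roots_X_sub_C, Polynomial.roots_X_sub_C, Polynomial.roots_X_sub_C,
    Polynomial.roots_X_sub_C, Polynomial.roots_X_sub_C,
    Multiset.nsmul_singleton, Multiset.nsmul_singleton, Multiset.nsmul_singleton]
  have hpair : ({(2 + ((2 * m + s : ℕ) : ℝ) +
          Real.sqrt ((2 + ((2 * m + s : ℕ) : ℝ))^2 - 16 * m)) / 2,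
       (2 + ((2 * m + s : ℕ) : ℝ) -
          Real.sqrt ((2 + ((2 * m + s : ℕ) : ℝ))^2 - 16 * m)) / 2} : Multiset ℝ)
      = {Stmt7.r1 m s} + {Stmt7.r2 m s} := by
    rw [Multiset.insert_eq_cons, ← Multiset.singleton_add]
    rfl
  rw [hpair]
  abel
end

section
/- Let G be a graph of order n having a dominating induced matching M with |M| = m. Then the spectral radius ρ of the adjacency matrix of G satisfies ρ ≤ (1 + √(1 + 8m(n−2m)))/2. -/
set_option maxHeartbeats 1600000

open Matrix Finset
open scoped Classical

lemma keyClass {V : Type*} {G : SimpleGraph V} {M : Finset (Sym2 V)} (hM : IsDIM G M)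
    {u v : V} (h : G.Adj u v) :
    s(u,v) ∈ M ∨ (matchedVert M u ∧ ¬ matchedVert M v) ∨
      (¬ matchedVert M u ∧ matchedVert M v) := by
  by_cases hm : s(u,v) ∈ M
  · exact Or.inl hm
  right
  obtain ⟨f, ⟨hfM, hsh⟩, huniq⟩ := hM.2 _ (G.mem_edgeSet.mpr h) hm
  by_cases hu : matchedVert M u <;> by_cases hv : matchedVert M v
  · exfalso
    obtain ⟨e1, he1, hu1⟩ := hu
    obtain ⟨e2, he2, hv2⟩ := hv
    have hne : u ≠ v := h.ne
    have h1 : e1 = f := huniq e1 ⟨he1, ⟨u, Sym2.mem_mk_left u v, hu1⟩⟩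
    have h2 : e2 = f := huniq e2 ⟨he2, ⟨v, Sym2.mem_mk_right u v, hv2⟩⟩
    have h12 : e1 = s(u,v) := (Sym2.mem_and_mem_iff hne).mp ⟨hu1, h1.trans h2.symm ▸ hv2⟩
    exact hm (h12 ▸ he1)
  · exact Or.inl ⟨hu, hv⟩
  · exact Or.inr ⟨hu, hv⟩
  · exfalso
    obtain ⟨w, hw1, hw2⟩ := hsh
    rcases Sym2.mem_iff.mp hw1 with rfl | rfl
    · exact hu ⟨f, hfM, hw2⟩
    · exact hv ⟨f, hfM, hw2⟩

lemma matchOnce {V : Type*} {G : SimpleGraph V} {M : Finset (Sym2 V)}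
    (hM : IsMatchingSet G M) (u : V) :
    ∀ v w : V, s(u,v) ∈ M → s(u,w) ∈ M → v = w := by
  intro v w hv hw
  by_cases he : s(u,v) = s(u,w)
  · exact (Sym2.congr_right).mp he
  · exact absurd ⟨u, Sym2.mem_mk_left u v, Sym2.mem_mk_left u w⟩
      (hM.2 _ hv _ hw he)

lemma cardMatched {V : Type*} [Fintype V] {G : SimpleGraph V} {M : Finset (Sym2 V)}
    (hM : IsMatchingSet G M) :
    (univ.filter (fun v => matchedVert M v)).card = 2 * M.card := by
  have hVm : univ.filter (fun v => matchedVert M v)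
      = M.biUnion (fun e => univ.filter (fun v => v ∈ e)) := by
    ext v; simp only [Finset.mem_filter]; simp [matchedVert]
  rw [hVm, Finset.card_biUnion]
  · have : ∀ e ∈ M, (univ.filter (fun v => v ∈ e)).card = 2 := by
      intro e he
      induction e using Sym2.ind with
      | _ a b =>
        have hab : a ≠ b := (G.mem_edgeSet.mp (hM.1 _ he)).ne
        have : univ.filter (fun v => v ∈ s(a,b)) = {a, b} := by
          ext v; simp [Sym2.mem_iff]
        rw [this, Finset.card_insert_of_notMem (by simp [hab]), Finset.card_singleton]
    rw [Finset.sum_congr rfl this]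
    simp [mul_comm]
  · intro e he f hf hef
    rw [Function.onFun, Finset.disjoint_filter]
    intro v _ hve hvf
    exact hM.2 e he f hf hef ⟨v, hve, hvf⟩

lemma crossSum {V : Type*} [Fintype V] (p q : V → Prop)
    [DecidablePred p] [DecidablePred q] (y : V → ℝ) :
    (∑ u, ∑ v, (if p u ∧ q v then y u * y v else 0))
      = (∑ u ∈ univ.filter p, y u) * (∑ v ∈ univ.filter q, y v) := by
  rw [Finset.sum_mul_sum]
  rw [Finset.sum_filter]
  refine Finset.sum_congr rfl fun u _ => ?_
  by_cases hu : p u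
  · simp only [hu, true_and, if_true]
    rw [Finset.sum_filter]
  · simp [hu]

lemma mPartSum {V : Type*} [Fintype V] [DecidableEq V] {G : SimpleGraph V}
    {M : Finset (Sym2 V)} (hM : IsMatchingSet G M) (y : V → ℝ) (hy : ∀ v, 0 ≤ y v) :
    (∑ u, ∑ v, (if s(u,v) ∈ M then y u * y v else 0))
      ≤ ∑ u ∈ univ.filter (fun u => matchedVert M u), y u ^ 2 := by
  have sw : (∑ u, ∑ v, (if s(u,v) ∈ M then y v ^ 2 else 0))
      = ∑ u, ∑ v, (if s(u,v) ∈ M then y u ^ 2 else 0) := by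
    rw [Finset.sum_comm]
    exact Finset.sum_congr rfl fun u _ => Finset.sum_congr rfl fun v _ => by
      rw [Sym2.eq_swap]
  have h1 : (∑ u, ∑ v, (if s(u,v) ∈ M then y u * y v else 0))
      ≤ ∑ u, ∑ v, (if s(u,v) ∈ M then (y u ^ 2 + y v ^ 2)/2 else 0) := by
    refine Finset.sum_le_sum fun u _ => Finset.sum_le_sum fun v _ => ?_
    split_ifs
    · nlinarith [sq_nonneg (y u - y v)]
    · exact le_rfl
  have h2 : (∑ u, ∑ v, (if s(u,v) ∈ M then (y u ^ 2 + y v ^ 2)/2 else 0))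
      = ∑ u, ∑ v, (if s(u,v) ∈ M then y u ^ 2 else 0) := by
    have e : ∀ u v : V, (if s(u,v) ∈ M then (y u ^ 2 + y v ^ 2)/2 else 0)
        = (if s(u,v) ∈ M then y u ^ 2 else 0)/2
          + (if s(u,v) ∈ M then y v ^ 2 else 0)/2 := by
      intro u v; split_ifs <;> ring
    simp_rw [e]
    rw [Finset.sum_congr rfl (fun u _ => Finset.sum_add_distrib), Finset.sum_add_distrib]
    simp_rw [← Finset.sum_div]
    rw [sw]
    ring
  have h3 : (∑ u, ∑ v, (if s(u,v) ∈ M then y u ^ 2 else 0))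
      ≤ ∑ u, (if matchedVert M u then y u ^ 2 else 0) := by
    refine Finset.sum_le_sum fun u _ => ?_
    have hsum : (∑ v, (if s(u,v) ∈ M then y u ^ 2 else 0))
        = ((univ.filter (fun v => s(u,v) ∈ M)).card : ℝ) * y u ^ 2 := by
      rw [← Finset.sum_filter, Finset.sum_const, nsmul_eq_mul]
    rw [hsum]
    by_cases hu : matchedVert M u
    · rw [if_pos hu]
      have hle : (univ.filter (fun v => s(u,v) ∈ M)).card ≤ 1 := by
        rw [Finset.card_le_one]
        intro a ha b hb
        exact matchOnce hM u a b (by simpa using ha) (by simpa using hb)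
      calc ((univ.filter (fun v => s(u,v) ∈ M)).card : ℝ) * y u ^ 2
          ≤ 1 * y u ^ 2 := by
            apply mul_le_mul_of_nonneg_right _ (sq_nonneg _)
            exact_mod_cast hle
        _ = y u ^ 2 := one_mul _
    · rw [if_neg hu]
      have hemp : univ.filter (fun v => s(u,v) ∈ M) = ∅ := by
        rw [Finset.filter_eq_empty_iff]
        intro v _ hvM
        exact hu ⟨s(u,v), hvM, Sym2.mem_mk_left u v⟩
      rw [hemp]; simp
  rw [Finset.sum_filter]
  linarith

lemma algKey {r c Qm Qu S T a b : ℝ} (hc : 0 < c) (hQm : 0 ≤ Qm) (hQu : 0 ≤ Qu)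
    (hsum : Qm + Qu = c) (hS : 0 ≤ S) (hT : 0 ≤ T) (ha : 0 ≤ a) (hb : 0 ≤ b)
    (hS2 : S^2 ≤ a*Qm) (hT2 : T^2 ≤ b*Qu) (hr : r * c ≤ Qm + 2*(S*T)) :
    r ≤ (1 + Real.sqrt (1 + 4*(a*b))) / 2 := by
  set w := Real.sqrt (1 + 4*(a*b)) with hwdef
  have hab : (0:ℝ) ≤ 1 + 4*(a*b) := by positivity
  have hw2 : w^2 = 1 + 4*(a*b) := Real.sq_sqrt hab
  have hw0 : 0 ≤ w := Real.sqrt_nonneg _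
  set P := Real.sqrt (Qm*Qu) with hPdef
  set R := Real.sqrt (a*b) with hRdef
  have hP2 : P^2 = Qm*Qu := Real.sq_sqrt (by positivity)
  have hR2 : R^2 = a*b := Real.sq_sqrt (by positivity)
  have hP0 : 0 ≤ P := Real.sqrt_nonneg _
  have hR0 : 0 ≤ R := Real.sqrt_nonneg _
  have hSTsq : (S*T)^2 ≤ (R*P)^2 := by
    have h1 : S^2 * T^2 ≤ (a*Qm) * (b*Qu) :=
      mul_le_mul hS2 hT2 (sq_nonneg T) (by positivity)
    nlinarith [hP2, hR2]
  have hST : S*T ≤ R*P := by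
    nlinarith [mul_nonneg hS hT, mul_nonneg hR0 hP0]
  have hc2 : (2*Qm - c)^2 + 4*(P^2) = c^2 := by rw [hP2, ← hsum]; ring
  have hcw : (c*w)^2 = ((2*Qm - c)^2 + 4*(P^2)) * (1 + 4*(R^2)) := by
    rw [hc2, mul_pow, hw2, hR2]
  have hkey2 : (2*Qm - c + 4*(R*P))^2 ≤ (c*w)^2 := by
    rw [hcw]; nlinarith [sq_nonneg (2*P - 2*R*(2*Qm - c))]
  have hkey : 2*Qm - c + 4*(R*P) ≤ c*w := by
    nlinarith [mul_nonneg hc.le hw0]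
  have h2 : r * c ≤ ((1 + w)/2) * c := by nlinarith
  exact le_of_mul_le_mul_right h2 hc

/-- If `G` has order `n` and a dominating induced matching of size `m`, then its
adjacency spectral radius satisfies `ρ ≤ (1+√(1+8m(n−2m)))/2`. -/
theorem stmt_8 (n m : ℕ) (G : SimpleGraph (Fin n)) [DecidableRel G.Adj]
    (M : Finset (Sym2 (Fin n))) (hM : IsDIM G M) (hcard : M.card = m)
    (ρ : ℝ) (hρ₁ : ρ ∈ spectrum ℝ (G.adjMatrix ℝ))
    (hρ₂ : ∀ μ ∈ spectrum ℝ (G.adjMatrix ℝ), μ ≤ ρ) :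
    ρ ≤ (1 + Real.sqrt (1 + 8 * m * ((n : ℝ) - 2 * m))) / 2 := by
  classical
  -- extract an eigenvector
  rw [spectrum.mem_iff, Matrix.isUnit_iff_isUnit_det, isUnit_iff_ne_zero, ne_eq,
    not_not] at hρ₁
  obtain ⟨x, hx0, hxv⟩ := (Matrix.exists_mulVec_eq_zero_iff).mpr hρ₁
  rw [Matrix.sub_mulVec, sub_eq_zero] at hxv
  have hA : (G.adjMatrix ℝ) *ᵥ x = ρ • x := by
    rw [← hxv, Algebra.algebraMap_eq_smul_one, Matrix.smul_mulVec,
      Matrix.one_mulVec]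
  set y : Fin n → ℝ := fun v => |x v| with hydef
  have hy : ∀ w, 0 ≤ y w := fun w => abs_nonneg _
  set c := ∑ v, x v ^ 2 with hcdef
  have hc : 0 < c := by
    obtain ⟨v, hv⟩ := Function.ne_iff.mp hx0
    exact Finset.sum_pos' (fun i _ => sq_nonneg _)
      ⟨v, Finset.mem_univ v, sq_pos_of_ne_zero hv⟩
  -- Rayleigh identity
  have hrc : ρ * c = ∑ u, ∑ v, (if G.Adj u v then x u * x v else 0) := by
    have e1 : ∑ u, x u * ((G.adjMatrix ℝ) *ᵥ x) u = ρ * c := by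
      rw [hA, hcdef, Finset.mul_sum]
      exact Finset.sum_congr rfl fun u _ => by simp [smul_eq_mul]; ring
    rw [← e1]
    refine Finset.sum_congr rfl fun u _ => ?_
    rw [Matrix.mulVec, dotProduct, Finset.mul_sum]
    refine Finset.sum_congr rfl fun v _ => ?_
    rw [SimpleGraph.adjMatrix_apply]
    split_ifs <;> ring
  -- pointwise domination of the quadratic form
  have step1 : ρ * c ≤
      (∑ u, ∑ v, (if s(u,v) ∈ M then y u * y v else 0)) +
      ((∑ u, ∑ v, (if matchedVert M u ∧ ¬ matchedVert M v then y u * y v else 0)) +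
       (∑ u, ∑ v, (if ¬ matchedVert M u ∧ matchedVert M v then y u * y v else 0))) := by
    rw [hrc, ← Finset.sum_add_distrib, ← Finset.sum_add_distrib]
    refine Finset.sum_le_sum fun u _ => ?_
    rw [← Finset.sum_add_distrib, ← Finset.sum_add_distrib]
    refine Finset.sum_le_sum fun v _ => ?_
    have hxy : x u * x v ≤ y u * y v := by
      calc x u * x v ≤ |x u * x v| := le_abs_self _
      _ = y u * y v := abs_mul _ _
    have hyy : 0 ≤ y u * y v := mul_nonneg (hy u) (hy v)
    by_cases h : G.Adj u v
    · rcases keyClass hM h with h1 | h1 | h1 <;>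
        · split_ifs <;> first | linarith | tauto
    · split_ifs <;> first | linarith | tauto
  have cross1 : (∑ u, ∑ v, (if matchedVert M u ∧ ¬ matchedVert M v then y u * y v else 0))
      = (∑ u ∈ univ.filter (fun u => matchedVert M u), y u)
        * (∑ v ∈ univ.filter (fun v => ¬ matchedVert M v), y v) :=
    crossSum _ _ y
  have cross2 : (∑ u, ∑ v, (if ¬ matchedVert M u ∧ matchedVert M v then y u * y v else 0))
      = (∑ u ∈ univ.filter (fun u => ¬ matchedVert M u), y u)
        * (∑ v ∈ univ.filter (fun v => matchedVert M v), y v) :=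
    crossSum _ _ y
  have mpart := mPartSum hM.1 y hy
  -- notation
  set S := ∑ u ∈ univ.filter (fun u : Fin n => matchedVert M u), y u with hSdef
  set T := ∑ u ∈ univ.filter (fun u : Fin n => ¬ matchedVert M u), y u with hTdef
  set Qm := ∑ u ∈ univ.filter (fun u : Fin n => matchedVert M u), y u ^ 2 with hQmdef
  set Qu := ∑ u ∈ univ.filter (fun u : Fin n => ¬ matchedVert M u), y u ^ 2 with hQudef
  have hρc : ρ * c ≤ Qm + 2*(S*T) := by
    rw [cross1, cross2] at step1
    have : T * S = S * T := mul_comm _ _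
    linarith
  -- cardinalities
  have hVmc : ((univ.filter (fun v : Fin n => matchedVert M v)).card) = 2 * m := by
    rw [cardMatched hM.1, hcard]
  have htot : (univ.filter (fun v : Fin n => matchedVert M v)).card
      + (univ.filter (fun v : Fin n => ¬ matchedVert M v)).card = n := by
    rw [Finset.card_filter_add_card_filter_not]
    simp
  have hVuc : (((univ.filter (fun v : Fin n => ¬ matchedVert M v)).card : ℝ))
      = (n : ℝ) - 2 * m := by
    have h := htot
    rw [hVmc] at h
    have : ((univ.filter (fun v : Fin n => ¬ matchedVert M v)).card : ℝ) + 2 * m = n := by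
      exact_mod_cast congrArg (Nat.cast : ℕ → ℝ) (by omega : (univ.filter
        (fun v : Fin n => ¬ matchedVert M v)).card + 2 * m = n)
    linarith
  -- Cauchy–Schwarz
  have hS2 : S ^ 2 ≤ (2 * (m:ℝ)) * Qm := by
    have h := Finset.sum_mul_sq_le_sq_mul_sq
      (univ.filter (fun u : Fin n => matchedVert M u)) (fun _ => (1:ℝ)) y
    simp only [one_mul, one_pow, Finset.sum_const, nsmul_eq_mul, mul_one] at h
    rw [hSdef, hQmdef]
    calc (∑ u ∈ univ.filter (fun u : Fin n => matchedVert M u), y u) ^ 2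
        ≤ ((univ.filter (fun u : Fin n => matchedVert M u)).card : ℝ)
          * ∑ u ∈ univ.filter (fun u : Fin n => matchedVert M u), y u ^ 2 := h
      _ = (2 * (m:ℝ)) * ∑ u ∈ univ.filter (fun u : Fin n => matchedVert M u), y u ^ 2 := by
          rw [hVmc]; push_cast; ring
  have hT2 : T ^ 2 ≤ ((n:ℝ) - 2 * m) * Qu := by
    have h := Finset.sum_mul_sq_le_sq_mul_sq
      (univ.filter (fun u : Fin n => ¬ matchedVert M u)) (fun _ => (1:ℝ)) y
    simp only [one_mul, one_pow, Finset.sum_const, nsmul_eq_mul, mul_one] at h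
    rw [hTdef, hQudef]
    calc (∑ u ∈ univ.filter (fun u : Fin n => ¬ matchedVert M u), y u) ^ 2
        ≤ (((univ.filter (fun u : Fin n => ¬ matchedVert M u)).card : ℝ))
          * ∑ u ∈ univ.filter (fun u : Fin n => ¬ matchedVert M u), y u ^ 2 := h
      _ = ((n:ℝ) - 2 * m) * ∑ u ∈ univ.filter (fun u : Fin n => ¬ matchedVert M u), y u ^ 2 := by
          rw [hVuc]
  -- sums of squares
  have hQm0 : 0 ≤ Qm := Finset.sum_nonneg fun v _ => sq_nonneg _
  have hQu0 : 0 ≤ Qu := Finset.sum_nonneg fun v _ => sq_nonneg _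
  have hS0 : 0 ≤ S := Finset.sum_nonneg fun v _ => hy v
  have hT0 : 0 ≤ T := Finset.sum_nonneg fun v _ => hy v
  have hQsum : Qm + Qu = c := by
    rw [hQmdef, hQudef, Finset.sum_filter_add_sum_filter_not univ
      (fun v : Fin n => matchedVert M v) (fun v => y v ^ 2), hcdef]
    exact Finset.sum_congr rfl fun v _ => sq_abs (x v)
  have hb : (0:ℝ) ≤ (n:ℝ) - 2 * m := by rw [← hVuc]; positivity
  have ha : (0:ℝ) ≤ 2 * (m:ℝ) := by positivity
  have final := algKey hc hQm0 hQu0 hQsum hS0 hT0 ha hb hS2 hT2 hρc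
  have heq : (1:ℝ) + 4 * ((2 * (m:ℝ)) * ((n:ℝ) - 2 * m)) = 1 + 8 * m * ((n:ℝ) - 2 * m) := by
    ring
  rw [heq] at final
  exact final
end

section
/- Let G be a graph of order n having a dominating induced matching M with |M| = m. Then the largest eigenvalue q₁ of the signless Laplacian Q(G) satisfies q₁ ≤ (2 + n + √((2+n)² − 16m))/2. -/
open Matrix Finset
open scoped Classical

section Aux

set_option linter.unusedSectionVars false

lemma eig_exists {n : ℕ} (A : Matrix (Fin n) (Fin n) ℝ) {μ : ℝ}
    (h : μ ∈ spectrum ℝ A) : ∃ x : Fin n → ℝ, x ≠ 0 ∧ A *ᵥ x = μ • x := by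
  rw [← AlgEquiv.spectrum_eq (Matrix.toLinAlgEquiv' : Matrix (Fin n) (Fin n) ℝ ≃ₐ[ℝ] _)] at h
  have h2 := Module.End.HasEigenvalue.of_mem_spectrum h
  obtain ⟨v, hv⟩ := h2.exists_hasEigenvector
  refine ⟨v, hv.2, ?_⟩
  have h3 := hv.apply_eq_smul
  rwa [Matrix.toLinAlgEquiv'_apply] at h3

lemma quad_form {n : ℕ} (G : SimpleGraph (Fin n)) [DecidableRel G.Adj] (x : Fin n → ℝ) :
    x ⬝ᵥ ((G.degMatrix ℝ + G.adjMatrix ℝ) *ᵥ x) =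
      (∑ i : Fin n, ∑ j : Fin n, if G.Adj i j then (x i + x j)^2 else 0) / 2 := by
  simp_rw [add_mulVec, dotProduct_add, SimpleGraph.dotProduct_mulVec_degMatrix,
    SimpleGraph.dotProduct_mulVec_adjMatrix, ← sum_add_distrib,
    SimpleGraph.degree_eq_sum_if_adj, sum_mul, ite_mul, one_mul,
    zero_mul, ← sum_add_distrib, ite_add_ite, add_zero]
  rw [← add_self_div_two (∑ x_1 : Fin n, ∑ x_2 : Fin n, _)]
  conv_lhs => enter [1,2,2,i,2,j]; rw [if_congr (SimpleGraph.adj_comm G i j) rfl rfl]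
  conv_lhs => enter [1,2]; rw [Finset.sum_comm]
  simp_rw [← sum_add_distrib, ite_add_ite]
  congr 2 with i
  congr 2 with j
  ring_nf

variable {V : Type*} [Fintype V] [DecidableEq V]

lemma card_matched {G : SimpleGraph V} {M : Finset (Sym2 V)} (h : IsMatchingSet G M) :
    (univ.filter (fun v => matchedVert M v)).card = 2 * M.card := by
  have hS : (univ.filter (fun v => matchedVert M v))
      = M.biUnion (fun e => univ.filter (· ∈ e)) := by
    ext v
    simp only [Finset.mem_filter, Finset.mem_univ, true_and, Finset.mem_biUnion]
    rfl
  rw [hS, Finset.card_biUnion]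
  · rw [Finset.sum_congr rfl (fun e he => ?_), Finset.sum_const, smul_eq_mul, mul_comm]
    have hd : ¬ e.IsDiag := G.not_isDiag_of_mem_edgeSet (h.1 e he)
    induction e using Sym2.ind with
    | _ a b =>
      rw [Sym2.mk_isDiag_iff] at hd
      have : (univ.filter (· ∈ s(a,b))) = {a, b} := by
        ext u; simp [Sym2.mem_iff]
      rw [this, Finset.card_insert_of_notMem (by simp [hd]), Finset.card_singleton]
  · intro e he f hf hef
    rw [Function.onFun, Finset.disjoint_left]
    intro v hv hv'
    simp only [Finset.mem_filter] at hv hv'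
    exact h.2 e he f hf hef ⟨v, hv.2, hv'.2⟩

lemma edge_classify {G : SimpleGraph V} {M : Finset (Sym2 V)} (h : IsDIM G M)
    {u v : V} (hadj : G.Adj u v) (hnm : s(u,v) ∉ M) :
    (matchedVert M u ∧ ¬ matchedVert M v) ∨ (¬ matchedVert M u ∧ matchedVert M v) := by
  obtain ⟨f, ⟨hfM, w, hwf1, hwf2⟩, huniq⟩ := h.2 s(u,v) (G.mem_edgeSet.2 hadj) hnm
  rw [Sym2.mem_iff] at hwf1
  have hone : matchedVert M u ∨ matchedVert M v := by
    rcases hwf1 with rfl | rfl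
    · exact Or.inl ⟨f, hfM, hwf2⟩
    · exact Or.inr ⟨f, hfM, hwf2⟩
  have hnotboth : ¬ (matchedVert M u ∧ matchedVert M v) := by
    rintro ⟨⟨e₁, he₁, hue₁⟩, ⟨e₂, he₂, hve₂⟩⟩
    have h1 : e₁ = f := huniq e₁ ⟨he₁, u, Sym2.mem_mk_left u v, hue₁⟩
    have h2 : e₂ = f := huniq e₂ ⟨he₂, v, Sym2.mem_mk_right u v, hve₂⟩
    have : e₁ = s(u,v) := Sym2.eq_of_ne_mem hadj.ne hue₁ (h1 ▸ h2 ▸ hve₂)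
      (Sym2.mem_mk_left u v) (Sym2.mem_mk_right u v)
    exact hnm (this ▸ he₁)
  tauto

lemma partner_unique {G : SimpleGraph V} {M : Finset (Sym2 V)} (h : IsMatchingSet G M)
    {u v w : V} (hv : s(u,v) ∈ M) (hw : s(u,w) ∈ M) : v = w := by
  by_cases he : s(u,v) = s(u,w)
  · exact Sym2.congr_right.1 he
  · exact absurd ⟨u, Sym2.mem_mk_left u v, Sym2.mem_mk_left u w⟩ (h.2 _ hv _ hw he)

lemma h1_sum {G : SimpleGraph V} {M : Finset (Sym2 V)}
    (h : IsMatchingSet G M) (x : V → ℝ) :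
    ∑ i : V, ∑ j : V, (if s(i,j) ∈ M then x i ^ 2 else 0)
      ≤ ∑ v ∈ univ.filter (fun v => matchedVert M v), x v ^ 2 := by
  rw [Finset.sum_filter]
  apply Finset.sum_le_sum
  intro i _
  rw [← Finset.sum_filter, Finset.sum_const, nsmul_eq_mul]
  by_cases hm : matchedVert M i
  · rw [if_pos hm]
    have hcard : (univ.filter (fun j => s(i,j) ∈ M)).card ≤ 1 := by
      apply Finset.card_le_one.2
      intro a ha b hb
      simp only [Finset.mem_filter] at ha hb
      exact partner_unique h ha.2 hb.2
    calc ((univ.filter (fun j => s(i,j) ∈ M)).card : ℝ) * x i ^ 2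
        ≤ 1 * x i ^ 2 := by
          apply mul_le_mul_of_nonneg_right _ (sq_nonneg _)
          exact_mod_cast hcard
      _ = x i ^ 2 := one_mul _
  · rw [if_neg hm]
    have : (univ.filter (fun j => s(i,j) ∈ M)) = ∅ := by
      ext j
      simp only [Finset.mem_filter, Finset.notMem_empty, iff_false, not_and]
      intro _ hj
      exact hm ⟨s(i,j), hj, Sym2.mem_mk_left i j⟩
    rw [this]
    simp

lemma cross_sum (x : V → ℝ) (A B : Finset V) :
    ∑ i ∈ A, ∑ j ∈ B, (x i + x j)^2 =
      B.card * ∑ i ∈ A, x i^2 + 2 * (∑ i ∈ A, x i) * (∑ j ∈ B, x j)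
        + A.card * ∑ j ∈ B, x j^2 := by
  simp_rw [add_sq, Finset.sum_add_distrib, Finset.sum_const, nsmul_eq_mul,
    ← Finset.mul_sum, ← Finset.sum_mul, Finset.mul_sum]

lemma scalar_ineq (nn mm P R X Y : ℝ) (hn : 2*mm ≤ nn) (hm : 0 ≤ mm)
    (hP : 0 ≤ P) (hR : 0 ≤ R) (hX : X^2 ≤ 2*mm*P) (hY : Y^2 ≤ (nn - 2*mm)*R) :
    (nn - 2*mm + 2)*P + 2*mm*R + 2*X*Y
      ≤ ((2 + nn + Real.sqrt ((2+nn)^2 - 16*mm))/2) * (P + R) := by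
  have hmn0 : (0:ℝ) ≤ nn - 2*mm := by linarith
  have hD : (0:ℝ) ≤ (2+nn)^2 - 16*mm := by
    nlinarith [sq_nonneg (mm-1), mul_nonneg hmn0 (by linarith : (0:ℝ) ≤ 4+nn+2*mm)]
  set s := Real.sqrt ((2+nn)^2 - 16*mm) with hs
  have hs2 : s^2 = (2+nn)^2 - 16*mm := Real.sq_sqrt hD
  have hs0 : 0 ≤ s := Real.sqrt_nonneg _
  set t := (2 + nn + s)/2 with ht
  have hA : 0 ≤ t - (nn - 2*mm + 2) := by nlinarith [mul_nonneg hm hmn0]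
  have hB : 0 ≤ t - 2*mm := by nlinarith [mul_nonneg hm hmn0]
  have hprod : (t - (nn - 2*mm + 2))*(t - 2*mm) = 2*mm*(nn-2*mm) := by
    rw [ht]; linear_combination hs2/4
  have hXY2 : X^2*Y^2 ≤ (2*mm*P)*((nn-2*mm)*R) :=
    mul_le_mul hX hY (sq_nonneg Y) (mul_nonneg (by linarith) hP)
  have hRHS : 0 ≤ (t - (nn - 2*mm + 2))*P + (t - 2*mm)*R :=
    add_nonneg (mul_nonneg hA hP) (mul_nonneg hB hR)
  have h1 : (2*X*Y)^2 ≤ ((t - (nn - 2*mm + 2))*P + (t - 2*mm)*R)^2 := by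
    nlinarith [sq_nonneg ((t - (nn - 2*mm + 2))*P - (t - 2*mm)*R), hXY2, hprod,
      mul_nonneg hP hR]
  have h2 : 2*X*Y ≤ (t - (nn - 2*mm + 2))*P + (t - 2*mm)*R := by
    calc 2*X*Y ≤ |2*X*Y| := le_abs_self _
      _ ≤ (t - (nn - 2*mm + 2))*P + (t - 2*mm)*R := by
          have := Real.sqrt_le_sqrt h1
          rwa [Real.sqrt_sq_eq_abs, Real.sqrt_sq hRHS] at this
  nlinarith [h2]

end Aux

set_option maxHeartbeats 1000000 in
/-- If `G` has order `n` and a dominating induced matching of size `m`, then its largest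
signless Laplacian eigenvalue satisfies `q₁ ≤ (2+n+√((2+n)²−16m))/2`. -/
theorem stmt_9 (n m : ℕ) (G : SimpleGraph (Fin n)) [DecidableRel G.Adj]
    (M : Finset (Sym2 (Fin n))) (hM : IsDIM G M) (hcard : M.card = m)
    (q₁ : ℝ) (hq₁ : q₁ ∈ spectrum ℝ (G.degMatrix ℝ + G.adjMatrix ℝ))
    (hq₂ : ∀ μ ∈ spectrum ℝ (G.degMatrix ℝ + G.adjMatrix ℝ), μ ≤ q₁) :
    q₁ ≤ (2 + (n : ℝ) + Real.sqrt ((2 + (n : ℝ))^2 - 16 * m)) / 2 := by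
  obtain ⟨x, hx0, hxe⟩ := eig_exists _ hq₁
  set S : Finset (Fin n) := univ.filter (fun v => matchedVert M v) with hSdef
  set U : Finset (Fin n) := univ.filter (fun v => ¬ matchedVert M v) with hUdef
  set P : ℝ := ∑ v ∈ S, x v ^ 2 with hPdef
  set R : ℝ := ∑ v ∈ U, x v ^ 2 with hRdef
  set X : ℝ := ∑ v ∈ S, x v with hXdef
  set Y : ℝ := ∑ v ∈ U, x v with hYdef
  have hScard : (S.card : ℝ) = 2 * m := by
    rw [hSdef, card_matched hM.1, hcard]; push_cast; ring
  have hSUcard : S.card + U.card = n := by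
    rw [hSdef, hUdef, Finset.card_filter_add_card_filter_not,
      Finset.card_univ, Fintype.card_fin]
  have hUcard : (U.card : ℝ) = (n : ℝ) - 2 * m := by
    have : (S.card : ℝ) + U.card = n := by exact_mod_cast hSUcard
    linarith
  have h2mn : 2 * (m:ℝ) ≤ n := by
    have h1 : S.card ≤ n := by
      calc S.card ≤ (univ : Finset (Fin n)).card := Finset.card_filter_le _ _
        _ = n := by rw [Finset.card_univ, Fintype.card_fin]
    have := hScard
    have h2 : (S.card : ℝ) ≤ n := by exact_mod_cast h1
    linarith
  have hP0 : 0 ≤ P := Finset.sum_nonneg fun v _ => sq_nonneg _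
  have hR0 : 0 ≤ R := Finset.sum_nonneg fun v _ => sq_nonneg _
  have hX2 : X^2 ≤ 2 * m * P := by
    have := sq_sum_le_card_mul_sum_sq (s := S) (f := x)
    rw [← hXdef, ← hPdef] at this
    calc X^2 ≤ (S.card : ℝ) * P := this
      _ = 2 * m * P := by rw [hScard]
  have hY2 : Y^2 ≤ ((n:ℝ) - 2*m) * R := by
    have := sq_sum_le_card_mul_sum_sq (s := U) (f := x)
    rw [← hYdef, ← hRdef] at this
    calc Y^2 ≤ (U.card : ℝ) * R := this
      _ = ((n:ℝ) - 2*m) * R := by rw [hUcard]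
  have hx2pos : 0 < ∑ v : Fin n, x v ^ 2 := by
    obtain ⟨v, hv⟩ := Function.ne_iff.1 hx0
    exact Finset.sum_pos' (fun i _ => sq_nonneg _) ⟨v, Finset.mem_univ v, sq_pos_iff.2 hv⟩
  have hsplit : ∑ v : Fin n, x v ^ 2 = P + R :=
    (Finset.sum_filter_add_sum_filter_not univ _ _).symm
  have hPRpos : 0 < P + R := hsplit ▸ hx2pos
  have hquad : q₁ * (P + R) =
      (∑ i : Fin n, ∑ j : Fin n, if G.Adj i j then (x i + x j)^2 else 0) / 2 := by
    rw [← quad_form G x, hxe, dotProduct_smul, smul_eq_mul]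
    congr 1
    have hdp : x ⬝ᵥ x = ∑ v : Fin n, x v ^ 2 := by
      simp [dotProduct, sq]
    rw [hdp, hsplit]
  -- pointwise bound
  have hpt : ∀ i j : Fin n, (if G.Adj i j then (x i + x j)^2 else 0) ≤
      (if s(i,j) ∈ M then (x i + x j)^2 else 0)
      + (if matchedVert M i ∧ ¬ matchedVert M j then (x i + x j)^2 else 0)
      + (if matchedVert M j ∧ ¬ matchedVert M i then (x i + x j)^2 else 0) := by
    intro i j
    by_cases ha : G.Adj i j
    · by_cases hm : s(i,j) ∈ M
      · simp only [ha, hm, if_true]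
        split_ifs <;> nlinarith [sq_nonneg (x i + x j)]
      · rcases edge_classify hM ha hm with h | h
        · simp [ha, hm, h.1, h.2]
        · simp [ha, hm, h.1, h.2]
    · simp only [ha, if_false]
      split_ifs <;> nlinarith [sq_nonneg (x i + x j)]
  have hsum1 : ∑ i : Fin n, ∑ j : Fin n, (if G.Adj i j then (x i + x j)^2 else 0)
      ≤ (∑ i : Fin n, ∑ j : Fin n, (if s(i,j) ∈ M then (x i + x j)^2 else 0))
        + (∑ i : Fin n, ∑ j : Fin n,
            (if matchedVert M i ∧ ¬ matchedVert M j then (x i + x j)^2 else 0))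
        + (∑ i : Fin n, ∑ j : Fin n,
            (if matchedVert M j ∧ ¬ matchedVert M i then (x i + x j)^2 else 0)) := by
    rw [← Finset.sum_add_distrib, ← Finset.sum_add_distrib]
    apply Finset.sum_le_sum
    intro i _
    rw [← Finset.sum_add_distrib, ← Finset.sum_add_distrib]
    exact Finset.sum_le_sum fun j _ => hpt i j
  -- matched-edge sum bound
  have hAsum : ∑ i : Fin n, ∑ j : Fin n, (if s(i,j) ∈ M then (x i + x j)^2 else 0)
      ≤ 4 * P := by
    have step1 : ∑ i : Fin n, ∑ j : Fin n, (if s(i,j) ∈ M then (x i + x j)^2 else 0)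
        ≤ ∑ i : Fin n, ∑ j : Fin n,
          ((if s(i,j) ∈ M then 2 * x i ^ 2 else 0) + (if s(i,j) ∈ M then 2 * x j ^ 2 else 0)) := by
      apply Finset.sum_le_sum; intro i _
      apply Finset.sum_le_sum; intro j _
      split_ifs <;> nlinarith [sq_nonneg (x i - x j)]
    have e1 : ∑ i : Fin n, ∑ j : Fin n, (if s(i,j) ∈ M then 2 * x i ^ 2 else 0)
        = 2 * ∑ i : Fin n, ∑ j : Fin n, (if s(i,j) ∈ M then x i ^ 2 else 0) := by
      rw [Finset.mul_sum]
      refine Finset.sum_congr rfl fun i _ => ?_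
      rw [Finset.mul_sum]
      refine Finset.sum_congr rfl fun j _ => ?_
      split_ifs <;> ring
    have e2 : ∑ i : Fin n, ∑ j : Fin n, (if s(i,j) ∈ M then 2 * x j ^ 2 else 0)
        = 2 * ∑ i : Fin n, ∑ j : Fin n, (if s(i,j) ∈ M then x i ^ 2 else 0) := by
      rw [Finset.sum_comm, Finset.mul_sum]
      refine Finset.sum_congr rfl fun i _ => ?_
      rw [Finset.mul_sum]
      refine Finset.sum_congr rfl fun j _ => ?_
      rw [show s(j,i) = s(i,j) from Sym2.eq_swap]
      split_ifs <;> ring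
    calc ∑ i : Fin n, ∑ j : Fin n, (if s(i,j) ∈ M then (x i + x j)^2 else 0)
        ≤ ∑ i : Fin n, ∑ j : Fin n,
          ((if s(i,j) ∈ M then 2 * x i ^ 2 else 0) + (if s(i,j) ∈ M then 2 * x j ^ 2 else 0)) :=
          step1
      _ = (∑ i : Fin n, ∑ j : Fin n, (if s(i,j) ∈ M then 2 * x i ^ 2 else 0))
          + (∑ i : Fin n, ∑ j : Fin n, (if s(i,j) ∈ M then 2 * x j ^ 2 else 0)) := by
          rw [← Finset.sum_add_distrib]
          exact Finset.sum_congr rfl fun i _ => Finset.sum_add_distrib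
      _ = 4 * ∑ i : Fin n, ∑ j : Fin n, (if s(i,j) ∈ M then x i ^ 2 else 0) := by
          rw [e1, e2]; ring
      _ ≤ 4 * P := by
          have := h1_sum hM.1 x
          rw [← hSdef, ← hPdef] at this
          linarith
  -- cross sums
  have hcrossB : ∑ i : Fin n, ∑ j : Fin n,
      (if matchedVert M i ∧ ¬ matchedVert M j then (x i + x j)^2 else 0)
      = ((n:ℝ) - 2*m) * P + 2 * X * Y + 2 * m * R := by
    have e3 : ∑ i : Fin n, ∑ j : Fin n,
        (if matchedVert M i ∧ ¬ matchedVert M j then (x i + x j)^2 else 0)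
        = ∑ i ∈ S, ∑ j ∈ U, (x i + x j)^2 := by
      rw [hSdef, hUdef, Finset.sum_filter]
      refine Finset.sum_congr rfl fun i _ => ?_
      by_cases h : matchedVert M i <;> simp [h, Finset.sum_filter]
    rw [e3, cross_sum, hUcard, hScard, ← hPdef, ← hRdef, ← hXdef, ← hYdef]
  have hcrossC : ∑ i : Fin n, ∑ j : Fin n,
      (if matchedVert M j ∧ ¬ matchedVert M i then (x i + x j)^2 else 0)
      = ((n:ℝ) - 2*m) * P + 2 * X * Y + 2 * m * R := by
    have e4 : ∑ i : Fin n, ∑ j : Fin n,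
        (if matchedVert M j ∧ ¬ matchedVert M i then (x i + x j)^2 else 0)
        = ∑ i ∈ S, ∑ j ∈ U, (x i + x j)^2 := by
      rw [Finset.sum_comm, hSdef, hUdef, Finset.sum_filter]
      refine Finset.sum_congr rfl fun i _ => ?_
      by_cases h : matchedVert M i <;> simp [h, Finset.sum_filter, add_comm]
    rw [e4, cross_sum, hUcard, hScard, ← hPdef, ← hRdef, ← hXdef, ← hYdef]
  -- final assembly
  have hsc := scalar_ineq (n:ℝ) (m:ℝ) P R X Y h2mn (by positivity) hP0 hR0 hX2 hY2
  have hfinal : q₁ * (P + R) ≤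
      ((2 + (n : ℝ) + Real.sqrt ((2 + (n : ℝ))^2 - 16 * m)) / 2) * (P + R) := by
    rw [hquad]
    rw [hcrossB, hcrossC] at hsum1
    linarith [hsum1, hAsum, hsc]
  exact le_of_mul_le_mul_right hfinal hPRpos
end
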